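/- arXiv:1609.04746 — 3 statements merged into one kernel-verified Lean document; each statement's English description precedes it below -/
import Mathlib

section
/- (Fundamental inequality) Suppose the block indices i(k) are IID uniform on {1,…,m}, the delay vectors j⃗(k) are IID, independent of the block sequence, and evenly old, and η^k is F^k-measurable and independent of i(k). Then for any fixed point x* of T, any sequence ε₁, ε₂, … ∈ (0,∞), and every k, the ARock iterates satisfy E[‖x^{k+1} − x*‖² | F^k] ≤ ‖x^k − x*‖² + (1/m) Σ_{i=1}^{j(k)} ε_i ‖x^{k+1−i} − x^{k−i}‖² − (η^k/m) ‖S x̂^k‖² (1 − η^k (1 + Σ_{i=1}^{j(k)} 1/ε_i)). -/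
open MeasureTheory ProbabilityTheory Filter Finset
set_option maxHeartbeats 1000000
open scoped ENNReal Topology

section ArockHelpers

open MeasureTheory ProbabilityTheory Finset

/-- half firm nonexpansiveness at a fixed point -/
lemma arock_firm {E : Type*} [NormedAddCommGroup E] [InnerProductSpace ℝ E]
    (T : E → E) (hT : LipschitzWith 1 T) (xs : E) (hxs : T xs = xs) (xh : E) :
    ‖xh - T xh‖ ^ 2 ≤ 2 * inner ℝ (xh - xs) (xh - T xh) := by
  have h1 : ‖T xh - T xs‖ ≤ ‖xh - xs‖ := by
    have := hT.dist_le_mul xh xs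
    simpa [dist_eq_norm] using this
  have h2 : ‖(xh - xs) - (xh - T xh)‖ ^ 2 ≤ ‖xh - xs‖ ^ 2 := by
    have h : (xh - xs) - (xh - T xh) = T xh - T xs := by rw [hxs]; abel
    rw [h]
    exact pow_le_pow_left₀ (norm_nonneg _) h1 2
  have h3 := norm_sub_sq_real (xh - xs) (xh - T xh)
  nlinarith [h2, h3]

lemma arock_young {E : Type*} [NormedAddCommGroup E] [InnerProductSpace ℝ E]
    (a b : E) {ε : ℝ} (hε : 0 < ε) :
    2 * inner ℝ a b ≤ ε * ‖a‖ ^ 2 + ε⁻¹ * ‖b‖ ^ 2 := by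
  have h1 : (inner ℝ a b : ℝ) ≤ ‖a‖ * ‖b‖ := real_inner_le_norm a b
  have h2 : ε * ε⁻¹ = 1 := mul_inv_cancel₀ hε.ne'
  nlinarith [sq_nonneg (ε * ‖a‖ - ‖b‖), hε, norm_nonneg a, norm_nonneg b]

/-- the deterministic core inequality -/
lemma arock_core {E : Type*} [NormedAddCommGroup E] [InnerProductSpace ℝ E]
    (T : E → E) (hT : LipschitzWith 1 T) (xs : E) (hxs : T xs = xs)
    (xk xh : E) (J : ℕ) (y Δ : ℕ → E)
    (hy : xk - xh = ∑ i ∈ range J, y i)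
    (hΔ : ∀ i ∈ range J, ‖y i‖ ≤ ‖Δ i‖)
    (ε : ℕ → ℝ) (hε : ∀ i, 0 < ε i) (η : ℝ) (hη : 0 < η) (mm : ℝ) (hmm : 0 < mm) :
    ‖xk - xs‖ ^ 2 - (2 * η / mm) * inner ℝ (xk - xs) (xh - T xh)
        + (η ^ 2 / mm) * ‖xh - T xh‖ ^ 2
      ≤ ‖xk - xs‖ ^ 2 + (1 / mm) * ∑ i ∈ range J, ε (i + 1) * ‖Δ i‖ ^ 2
        - (η / mm) * ‖xh - T xh‖ ^ 2
          * (1 - η * (1 + ∑ i ∈ range J, (ε (i + 1))⁻¹)) := by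
  set d := xh - T xh with hd
  have hsplit : (inner ℝ (xk - xs) d : ℝ) = inner ℝ (xk - xh) d + inner ℝ (xh - xs) d := by
    have h : (xk - xh) + (xh - xs) = xk - xs := by abel
    rw [← h, inner_add_left]
  have hsum : (inner ℝ (xk - xh) d : ℝ) = ∑ i ∈ range J, inner ℝ (y i) d := by
    rw [hy, sum_inner]
  have hfirm : ‖d‖ ^ 2 ≤ 2 * inner ℝ (xh - xs) d := arock_firm T hT xs hxs xh
  have hterm : ∀ i ∈ range J, -(2 * η * inner ℝ (y i) d)
      ≤ ε (i + 1) * ‖Δ i‖ ^ 2 + (ε (i + 1))⁻¹ * (η ^ 2 * ‖d‖ ^ 2) := by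
    intro i hi
    have h := arock_young (-(y i)) (η • d) (hε (i + 1))
    have e1 : (inner ℝ (-(y i)) (η • d) : ℝ) = -(η * inner ℝ (y i) d) := by
      rw [inner_neg_left, real_inner_smul_right]
    have e2 : ‖(-(y i) : E)‖ = ‖y i‖ := norm_neg _
    have e3 : ‖η • d‖ ^ 2 = η ^ 2 * ‖d‖ ^ 2 := by
      rw [norm_smul, mul_pow, Real.norm_eq_abs, sq_abs]
    rw [e1, e2, e3] at h
    have h4 : ε (i + 1) * ‖y i‖ ^ 2 ≤ ε (i + 1) * ‖Δ i‖ ^ 2 :=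
      mul_le_mul_of_nonneg_left
        (pow_le_pow_left₀ (norm_nonneg _) (hΔ i hi) 2) (hε (i + 1)).le
    nlinarith [h, h4]
  have hsumterm : -(2 * η * ∑ i ∈ range J, (inner ℝ (y i) d : ℝ))
      ≤ (∑ i ∈ range J, ε (i + 1) * ‖Δ i‖ ^ 2)
        + (∑ i ∈ range J, (ε (i + 1))⁻¹) * (η ^ 2 * ‖d‖ ^ 2) := by
    rw [Finset.sum_mul]
    calc -(2 * η * ∑ i ∈ range J, (inner ℝ (y i) d : ℝ))
        = ∑ i ∈ range J, -(2 * η * (inner ℝ (y i) d : ℝ)) := by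
          rw [Finset.mul_sum, ← Finset.sum_neg_distrib]
      _ ≤ ∑ i ∈ range J, (ε (i + 1) * ‖Δ i‖ ^ 2 + (ε (i + 1))⁻¹ * (η ^ 2 * ‖d‖ ^ 2)) :=
          Finset.sum_le_sum hterm
      _ = _ := by rw [Finset.sum_add_distrib]
  have hcore : -(2 * η * (inner ℝ (xk - xs) d : ℝ))
      ≤ (∑ i ∈ range J, ε (i + 1) * ‖Δ i‖ ^ 2) - η * ‖d‖ ^ 2
        + η ^ 2 * ‖d‖ ^ 2 * (∑ i ∈ range J, (ε (i + 1))⁻¹) := by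
    rw [hsplit, hsum]
    nlinarith [hsumterm, hfirm, hη]
  have hmul := mul_le_mul_of_nonneg_left hcore (le_of_lt (inv_pos.mpr hmm))
  simp only [div_eq_mul_inv]
  ring_nf
  ring_nf at hmul
  linarith [hmul]

lemma arock_weighted_cs {ι : Type*} (s : Finset ι) (w a : ι → ℝ)
    (hw : ∀ i ∈ s, 0 < w i) :
    (∑ i ∈ s, a i) ^ 2 ≤ (∑ i ∈ s, (w i)⁻¹) * (∑ i ∈ s, w i * a i ^ 2) := by
  have h := sum_mul_sq_le_sq_mul_sq s (fun i => Real.sqrt (w i)⁻¹)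
      (fun i => Real.sqrt (w i) * a i)
  have h1 : ∀ i ∈ s, Real.sqrt (w i)⁻¹ * (Real.sqrt (w i) * a i) = a i := by
    intro i hi
    rw [← mul_assoc, ← Real.sqrt_mul (by exact inv_nonneg.mpr (hw i hi).le) _,
      inv_mul_cancel₀ (hw i hi).ne', Real.sqrt_one, one_mul]
  have h2 : ∀ i ∈ s, (Real.sqrt (w i)⁻¹) ^ 2 = (w i)⁻¹ := by
    intro i hi; exact Real.sq_sqrt (inv_nonneg.mpr (hw i hi).le)
  have h3 : ∀ i ∈ s, (Real.sqrt (w i) * a i) ^ 2 = w i * a i ^ 2 := by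
    intro i hi; rw [mul_pow, Real.sq_sqrt (hw i hi).le]
  rw [Finset.sum_congr rfl h1, Finset.sum_congr rfl h2, Finset.sum_congr rfl h3] at h
  exact h

/-- nonnegativity of the right-hand side -/
lemma arock_rhs_nonneg {E : Type*} [NormedAddCommGroup E] [InnerProductSpace ℝ E]
    (T : E → E) (hT : LipschitzWith 1 T) (xs : E) (hxs : T xs = xs)
    (xk xh : E) (J : ℕ) (y Δ : ℕ → E)
    (hy : xk - xh = ∑ i ∈ range J, y i)
    (hΔ : ∀ i ∈ range J, ‖y i‖ ≤ ‖Δ i‖)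
    (ε : ℕ → ℝ) (hε : ∀ i, 0 < ε i) (η : ℝ) (hη : 0 < η) (mm : ℝ) (hmm : 1 ≤ mm) :
    0 ≤ ‖xk - xs‖ ^ 2 + (1 / mm) * ∑ i ∈ range J, ε (i + 1) * ‖Δ i‖ ^ 2
        - (η / mm) * ‖xh - T xh‖ ^ 2
          * (1 - η * (1 + ∑ i ∈ range J, (ε (i + 1))⁻¹)) := by
  have hmm0 : (0:ℝ) < mm := lt_of_lt_of_le one_pos hmm
  set d := xh - T xh with hd
  set S1 : ℝ := ∑ i ∈ range J, ε (i + 1) * ‖Δ i‖ ^ 2 with hS1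
  set S2 : ℝ := ∑ i ∈ range J, (ε (i + 1))⁻¹ with hS2
  have hS1nn : 0 ≤ S1 := Finset.sum_nonneg fun i _ => mul_nonneg (hε _).le (sq_nonneg _)
  have hS2nn : 0 ≤ S2 := Finset.sum_nonneg fun i _ => (inv_pos.mpr (hε _)).le
  set C : ℝ := 1 + S2 with hC
  have hC0 : (0:ℝ) < C := by positivity
  set A : ℝ := ‖xk - xs‖ ^ 2 with hA
  have hAnn : 0 ≤ A := sq_nonneg _
  have step1 : ‖d‖ ≤ 2 * ‖xh - xs‖ := by
    have h1 : ‖T xh - T xs‖ ≤ ‖xh - xs‖ := by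
      have := hT.dist_le_mul xh xs
      simpa [dist_eq_norm] using this
    have h2 : d = (xh - xs) - (T xh - T xs) := by rw [hd, hxs]; abel
    calc ‖d‖ = ‖(xh - xs) - (T xh - T xs)‖ := by rw [h2]
      _ ≤ ‖xh - xs‖ + ‖T xh - T xs‖ := norm_sub_le _ _
      _ ≤ 2 * ‖xh - xs‖ := by linarith
  have step2 : ‖xh - xs‖ ≤ ‖xk - xs‖ + ∑ i ∈ range J, ‖Δ i‖ := by
    have h2 : xh - xs = (xk - xs) - (xk - xh) := by abel
    calc ‖xh - xs‖ = ‖(xk - xs) - (xk - xh)‖ := by rw [h2]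
      _ ≤ ‖xk - xs‖ + ‖xk - xh‖ := norm_sub_le _ _
      _ ≤ ‖xk - xs‖ + ∑ i ∈ range J, ‖Δ i‖ := by
          refine add_le_add le_rfl ?_
          rw [hy]
          exact (norm_sum_le _ _).trans (Finset.sum_le_sum hΔ)
  have step3 : (‖xk - xs‖ + ∑ i ∈ range J, ‖Δ i‖) ^ 2 ≤ C * (A + S1) := by
    have h := arock_weighted_cs (range (J + 1))
        (fun i => if i = 0 then 1 else ε i)
        (fun i => if i = 0 then ‖xk - xs‖ else ‖Δ (i - 1)‖)
        (fun i _ => by split <;> [norm_num; exact hε i])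
    rw [Finset.sum_range_succ', Finset.sum_range_succ', Finset.sum_range_succ'] at h
    simpa [hS1, hS2, hC, hA, add_comm] using h
  have step4 : ‖d‖ ^ 2 ≤ 4 * (C * (A + S1)) := by
    have h1 : ‖d‖ ^ 2 ≤ (2 * ‖xh - xs‖) ^ 2 :=
      pow_le_pow_left₀ (norm_nonneg _) step1 2
    have h2 : ‖xh - xs‖ ^ 2 ≤ (‖xk - xs‖ + ∑ i ∈ range J, ‖Δ i‖) ^ 2 :=
      pow_le_pow_left₀ (norm_nonneg _) step2 2
    nlinarith [step3]
  by_cases hcase : 1 - η * C ≤ 0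
  · have h1 : (η / mm) * ‖d‖ ^ 2 * (1 - η * C) ≤ 0 := by
      apply mul_nonpos_of_nonneg_of_nonpos _ hcase
      positivity
    have h2 : (1 / mm) * S1 ≥ 0 := by positivity
    simp only [hC] at h1
    nlinarith [h1, hAnn, h2]
  · push_neg at hcase
    have step5 : η * (1 - η * C) ≤ 1 / (4 * C) := by
      rw [le_div_iff₀ (by positivity)]
      nlinarith [sq_nonneg (2 * C * η - 1)]
    have key : (η / mm) * ‖d‖ ^ 2 * (1 - η * C) ≤ A + (1 / mm) * S1 := by
      have h1 : (η / mm) * ‖d‖ ^ 2 * (1 - η * C)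
          = (η * (1 - η * C)) * ‖d‖ ^ 2 / mm := by ring
      have h2 : (η * (1 - η * C)) * ‖d‖ ^ 2 ≤ (1 / (4 * C)) * (4 * (C * (A + S1))) := by
        apply mul_le_mul step5 step4 (sq_nonneg _)
        positivity
      have h3 : (1 / (4 * C)) * (4 * (C * (A + S1))) = A + S1 := by
        field_simp
      have h4 : (A + S1) / mm ≤ A + (1 / mm) * S1 := by
        rw [div_le_iff₀ hmm0]
        have h6 : A * 1 ≤ A * mm := mul_le_mul_of_nonneg_left hmm hAnn
        have h5 : (1 / mm) * S1 * mm = S1 := by field_simp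
        nlinarith [h6]
      calc (η / mm) * ‖d‖ ^ 2 * (1 - η * C) = (η * (1 - η * C)) * ‖d‖ ^ 2 / mm := h1
        _ ≤ (1 / (4 * C)) * (4 * (C * (A + S1))) / mm := (div_le_div_iff_of_pos_right hmm0).mpr h2
        _ = (A + S1) / mm := by rw [h3]
        _ ≤ A + (1 / mm) * S1 := h4
    simp only [hC] at key
    linarith [key]

section Meas
variable {m : ℕ} {H : Fin m → Type*} [∀ i, NormedAddCommGroup (H i)]
  [∀ i, InnerProductSpace ℝ (H i)]
  [∀ i, SecondCountableTopology (H i)]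
  [∀ i, MeasurableSpace (H i)] [∀ i, BorelSpace (H i)]
  [MeasurableSpace (PiLp 2 H)] [BorelSpace (PiLp 2 H)]

lemma arock_measurable_pilp_iff {Ω : Type*} {mΩ : MeasurableSpace Ω} (f : Ω → PiLp 2 H) :
    Measurable f ↔ ∀ i, Measurable fun ω => f ω i := by
  haveI : BorelSpace (∀ i, H i) := Pi.borelSpace
  have hmeas : Measurable ((PiLp.continuousLinearEquiv 2 ℝ H : PiLp 2 H → ∀ i, H i)) :=
    (PiLp.continuousLinearEquiv 2 ℝ H).continuous.measurable
  have hmeas' : Measurable ((PiLp.continuousLinearEquiv 2 ℝ H).symm : (∀ i, H i) → PiLp 2 H) :=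
    (PiLp.continuousLinearEquiv 2 ℝ H).symm.continuous.measurable
  constructor
  · intro hf i
    have h2 : Measurable fun ω => (PiLp.continuousLinearEquiv 2 ℝ H) (f ω) i :=
      (measurable_pi_apply i).comp (hmeas.comp hf)
    exact h2
  · intro hf
    have h1 : Measurable fun ω => (fun i => f ω i : ∀ i, H i) := measurable_pi_lambda _ hf
    have h2 : Measurable fun ω =>
        ((PiLp.continuousLinearEquiv 2 ℝ H).symm (fun i => f ω i) : PiLp 2 H) :=
      hmeas'.comp h1
    exact h2

lemma arock_pilp_sum_apply {ι : Type*} (s : Finset ι) (v : ι → PiLp 2 H) (l : Fin m) :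
    (∑ i ∈ s, v i) l = ∑ i ∈ s, v i l := by
  classical
  induction s using Finset.cons_induction with
  | empty => rfl
  | cons a s ha ih => rw [Finset.sum_cons, Finset.sum_cons, ← ih]; rfl

end Meas

lemma arock_measurable_select {Ω γ : Type*} {mΩ : MeasurableSpace Ω} {mγ : MeasurableSpace γ}
    (f : ℕ → Ω → γ) (hf : ∀ n, Measurable (f n)) (g : Ω → ℕ) (hg : Measurable g) :
    Measurable fun ω => f (g ω) ω := by
  have h : Measurable fun p : Ω × ℕ => f p.2 p.1 :=
    measurable_from_prod_countable_left fun n => hf n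
  exact h.comp (measurable_id.prodMk hg)

lemma arock_comap_pi {Ω ι : Type*} {β : ι → Type*} [∀ i, MeasurableSpace (β i)]
    (g : ∀ i, Ω → β i) :
    MeasurableSpace.comap (fun ω i => g i ω) MeasurableSpace.pi
      = ⨆ i, MeasurableSpace.comap (g i) inferInstance := by
  rw [MeasurableSpace.pi, MeasurableSpace.comap_iSup]
  refine iSup_congr fun i => ?_
  rw [MeasurableSpace.comap_comp]
  rfl

/-- From `Indep m₁ m₂` and `Indep (m₁ ⊔ m₂) m₃` conclude `Indep m₁ (m₂ ⊔ m₃)`. -/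
lemma arock_indep_sup_right {Ω : Type*} {mΩ : MeasurableSpace Ω} {μ : MeasureTheory.Measure Ω}
    [MeasureTheory.IsProbabilityMeasure μ] {m₁ m₂ m₃ : MeasurableSpace Ω}
    (h1 : m₁ ≤ mΩ) (h2 : m₂ ≤ mΩ) (h3 : m₃ ≤ mΩ)
    (h12 : Indep m₁ m₂ μ) (h123 : Indep (m₁ ⊔ m₂) m₃ μ) :
    Indep m₁ (m₂ ⊔ m₃) μ := by
  set p1 : Set (Set Ω) := {s | MeasurableSet[m₁] s} with hp1def
  set p2 : Set (Set Ω) := {s | ∃ s₂ s₃, MeasurableSet[m₂] s₂ ∧ MeasurableSet[m₃] s₃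
      ∧ s = s₂ ∩ s₃} with hp2def
  have hp1 : IsPiSystem p1 := fun s hs t ht _ => hs.inter ht
  have hp2 : IsPiSystem p2 := by
    rintro s ⟨s₂, s₃, hs₂, hs₃, rfl⟩ t ⟨t₂, t₃, ht₂, ht₃, rfl⟩ _
    refine ⟨s₂ ∩ t₂, s₃ ∩ t₃, ?_, ?_, by ext ω; simp; tauto⟩
    · exact MeasurableSet.inter (by exact hs₂) (by exact ht₂)
    · exact MeasurableSet.inter (by exact hs₃) (by exact ht₃)
  have hgen1 : m₁ = MeasurableSpace.generateFrom p1 :=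
    (@MeasurableSpace.generateFrom_measurableSet Ω m₁).symm
  have hgen2 : m₂ ⊔ m₃ = MeasurableSpace.generateFrom p2 := by
    apply le_antisymm
    · refine sup_le ?_ ?_
      · intro s hs
        exact MeasurableSpace.measurableSet_generateFrom
          ⟨s, Set.univ, hs, MeasurableSet.univ, by simp⟩
      · intro s hs
        exact MeasurableSpace.measurableSet_generateFrom
          ⟨Set.univ, s, MeasurableSet.univ, hs, by simp⟩
    · refine MeasurableSpace.generateFrom_le ?_
      rintro s ⟨s₂, s₃, hs₂, hs₃, rfl⟩
      exact ((le_sup_left : m₂ ≤ m₂ ⊔ m₃) _ hs₂).inter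
        ((le_sup_right : m₃ ≤ m₂ ⊔ m₃) _ hs₃)
  refine IndepSets.indep h1 (sup_le h2 h3) hp1 hp2 hgen1 hgen2 ?_
  rw [IndepSets_iff]
  rintro t1 t ht1 ⟨s₂, s₃, hs₂, hs₃, rfl⟩
  rw [Indep_iff] at h12 h123
  have e1 : μ (t1 ∩ (s₂ ∩ s₃)) = μ (t1 ∩ s₂) * μ s₃ := by
    rw [← Set.inter_assoc]
    exact h123 _ _ ((le_sup_left : m₁ ≤ m₁ ⊔ m₂) _ ht1 |>.inter
      ((le_sup_right : m₂ ≤ m₁ ⊔ m₂) _ hs₂)) hs₃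
  have e2 : μ (s₂ ∩ s₃) = μ s₂ * μ s₃ :=
    h123 _ _ ((le_sup_right : m₂ ≤ m₁ ⊔ m₂) _ hs₂) hs₃
  rw [e1, h12 _ _ ht1 hs₂, e2, mul_assoc]

end ArockHelpers


/-- **Fundamental inequality.** Under IID uniform blocks, IID evenly old delays independent
of the blocks, and an `F^k`-measurable step size independent of `i(k)`, for any fixed point
`x*` of `T`, any positive parameters `ε₁, ε₂, …` and every `k`, the ARock iterates satisfy
`E[‖x^{k+1} − x*‖² | F^k] ≤ ‖x^k − x*‖² + (1/m) ∑_{i=1}^{j(k)} εᵢ ‖x^{k+1−i} − x^{k−i}‖²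
  − (η^k/m) ‖S x̂^k‖² (1 − η^k (1 + ∑_{i=1}^{j(k)} 1/εᵢ))`. -/
theorem arock_fundamental_inequality
    {m : ℕ} (hm : 0 < m)
    {H : Fin m → Type*} [∀ i, NormedAddCommGroup (H i)]
    [∀ i, InnerProductSpace ℝ (H i)] [∀ i, CompleteSpace (H i)]
    [∀ i, SecondCountableTopology (H i)]
    [MeasurableSpace (PiLp 2 H)] [BorelSpace (PiLp 2 H)]
    (T : PiLp 2 H → PiLp 2 H) (hT : LipschitzWith 1 T)
    (xs : PiLp 2 H) (hxs : T xs = xs)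
    {Ω : Type*} [MeasurableSpace Ω] (μ : Measure Ω) [IsProbabilityMeasure μ]
    -- block indices and delay vectors
    (idx : ℕ → Ω → Fin m) (jv : ℕ → Ω → Fin m → ℕ)
    (hidx_meas : ∀ k, Measurable (idx k))
    (hjv_meas : ∀ k, Measurable (jv k))
    -- blocks are IID uniform
    (hidx_unif : ∀ k a, μ {ω | idx k ω = a} = ((m : ℝ≥0∞))⁻¹)
    (hidx_indep : iIndepFun idx μ)
    -- delays are IID, independent of the blocks, and evenly old
    (hjv_indep : iIndepFun jv μ)
    (hjv_ident : ∀ k, IdentDistrib (jv k) (jv 0) μ μ)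
    (hindep : IndepFun (fun ω k => idx k ω) (fun ω k => jv k ω) μ)
    (hevenold : ∃ B : ℕ, ∀ᵐ ω ∂μ, ∀ (k : ℕ) (i l : Fin m),
      |(jv k ω i : ℤ) - (jv k ω l : ℤ)| ≤ (B : ℤ))
    -- parameters ε₁, ε₂, … ∈ (0,∞)
    (ε : ℕ → ℝ) (hε : ∀ i, 0 < ε i)
    -- the iterates, with possibly random step size
    (η : ℕ → Ω → ℝ) (hη_pos : ∀ k ω, 0 < η k ω)
    (x : ℕ → Ω → PiLp 2 H) (x0 : PiLp 2 H) (hx0 : ∀ ω, x 0 ω = x0)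
    (hx_meas : ∀ k, Measurable (x k))
    -- the delayed iterate x̂^k, with x̂^k_l = x^{k−j(k,l)}_l (and x^n = x^0 for n < 0)
    (xhat : ℕ → Ω → PiLp 2 H)
    (hxhat : ∀ (k : ℕ) (ω : Ω) (l : Fin m), xhat k ω l = x (k - jv k ω l) ω l)
    -- the filtration F^k = σ(x^0,…,x^k, j⃗(0),…,j⃗(k))
    (F : ℕ → MeasurableSpace Ω)
    (hF : ∀ k, F k = (⨆ t ∈ Set.Iic k, MeasurableSpace.comap (x t) inferInstance)
        ⊔ ⨆ t ∈ Set.Iic k, MeasurableSpace.comap (jv t) inferInstance)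
    -- η^k is F^k-measurable and independent of i(k)
    (hη_meas : ∀ k, Measurable[F k] (η k))
    (hη_indep : ∀ k, IndepFun (η k) (idx k) μ)
    -- the ARock recursion
    (hrec : ∀ (k : ℕ) (ω : Ω) (i : Fin m),
      x (k + 1) ω i = if i = idx k ω then
          x k ω i - η k ω • (xhat k ω i - T (xhat k ω) i)
        else x k ω i) :
    -- conclusion
    ∀ k : ℕ, ∀ᵐ ω ∂μ,
      (μ[fun ω' => ‖x (k + 1) ω' - xs‖ ^ 2 | F k]) ω
        ≤ ‖x k ω - xs‖ ^ 2
          + (1 / (m : ℝ)) * ∑ i ∈ Finset.range (Finset.univ.sup (jv k ω)),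
              ε (i + 1) * ‖x (k - i) ω - x (k - i - 1) ω‖ ^ 2
          - (η k ω / m) * ‖xhat k ω - T (xhat k ω)‖ ^ 2
            * (1 - η k ω * (1 + ∑ i ∈ Finset.range (Finset.univ.sup (jv k ω)),
                (ε (i + 1))⁻¹)) := by
  
  intro k
  -- borelize the component spaces
  letI mH : ∀ i, MeasurableSpace (H i) := fun i => borel (H i)
  haveI bH : ∀ i, BorelSpace (H i) := fun i => ⟨rfl⟩
  haveI : SecondCountableTopology (PiLp 2 H) :=
    inferInstance
  have hTm : Measurable T := hT.continuous.measurable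
  have hm0 : (0:ℝ) < (m:ℝ) := by exact_mod_cast hm
  have hm1 : (1:ℝ) ≤ (m:ℝ) := by exact_mod_cast hm
  -- σ-algebra bookkeeping
  have hF_le : F k ≤ ‹MeasurableSpace Ω› := by
    rw [hF k]
    exact sup_le (iSup₂_le fun t _ => (hx_meas t).comap_le)
      (iSup₂_le fun t _ => (hjv_meas t).comap_le)
  have hx_F : ∀ t, t ≤ k → Measurable[F k] (x t) := by
    intro t ht
    rw [measurable_iff_comap_le, hF k]
    exact le_trans
      (le_iSup₂ (f := fun t (_ : t ∈ Set.Iic k) =>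
        MeasurableSpace.comap (x t) inferInstance) t ht) le_sup_left
  have hjv_F : ∀ t, t ≤ k → Measurable[F k] (jv t) := by
    intro t ht
    rw [measurable_iff_comap_le, hF k]
    exact le_trans
      (le_iSup₂ (f := fun t (_ : t ∈ Set.Iic k) =>
        MeasurableSpace.comap (jv t) inferInstance) t ht) le_sup_right
  have hxk_F : Measurable[F k] (x k) := hx_F k le_rfl
  have hxhat_F : Measurable[F k] (xhat k) := by
    rw [arock_measurable_pilp_iff]
    intro l
    have heq : (fun ω => xhat k ω l) = fun ω => x (k - jv k ω l) ω l :=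
      funext fun ω => hxhat k ω l
    rw [heq]
    exact arock_measurable_select (fun n ω => x (k - n) ω l)
      (fun n => (arock_measurable_pilp_iff _).mp (hx_F _ (Nat.sub_le k n)) l)
      (fun ω => jv k ω l) ((measurable_pi_apply l).comp (hjv_F k le_rfl))
  have hS_F : Measurable[F k] fun ω => xhat k ω - T (xhat k ω) :=
    hxhat_F.sub (hTm.comp hxhat_F)
  -- per-block values
  set G : Fin m → Ω → ℝ := fun a ω =>
    ‖x k ω - xs‖ ^ 2 - ‖x k ω a - xs a‖ ^ 2
      + ‖x k ω a - xs a - η k ω • (xhat k ω a - T (xhat k ω) a)‖ ^ 2 with hGdef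
  have hG_F : ∀ a, Measurable[F k] (G a) := by
    intro a
    have hxa : Measurable[F k] fun ω => x k ω a :=
      (arock_measurable_pilp_iff _).mp hxk_F a
    have hSa : Measurable[F k] fun ω => xhat k ω a - T (xhat k ω) a := by
      have h := (arock_measurable_pilp_iff _).mp hS_F a
      exact h
    have hc1 : Measurable[F k] (fun _ : Ω => xs) :=
      @measurable_const (PiLp 2 H) Ω _ (F k) xs
    have hc2 : Measurable[F k] (fun _ : Ω => xs a) :=
      @measurable_const (H a) Ω _ (F k) (xs a)
    have h1 : Measurable[F k] fun ω => ‖x k ω - xs‖ ^ 2 := by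
      exact (measurable_norm.comp (hxk_F.sub hc1)).pow_const 2
    have h2 : Measurable[F k] fun ω => ‖x k ω a - xs a‖ ^ 2 := by
      exact (measurable_norm.comp (hxa.sub hc2)).pow_const 2
    have h3 : Measurable[F k] fun ω =>
        ‖x k ω a - xs a - η k ω • (xhat k ω a - T (xhat k ω) a)‖ ^ 2 := by
      exact (measurable_norm.comp ((hxa.sub hc2).sub ((hη_meas k).smul hSa))).pow_const 2
    exact (h1.sub h2).add h3
  -- the identity (∑ₐ G a ω)/m = the "ideal" conditional expectation
  have hGsum : ∀ ω, (∑ a, G a ω) * (m:ℝ)⁻¹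
      = ‖x k ω - xs‖ ^ 2
        - (2 * η k ω / (m:ℝ)) * inner ℝ (x k ω - xs) (xhat k ω - T (xhat k ω))
        + ((η k ω) ^ 2 / (m:ℝ)) * ‖xhat k ω - T (xhat k ω)‖ ^ 2 := by
    intro ω
    have hterm : ∀ a : Fin m, G a ω
        = ‖x k ω - xs‖ ^ 2
          - 2 * η k ω * inner ℝ ((x k ω - xs) a) ((xhat k ω - T (xhat k ω)) a)
          + (η k ω) ^ 2 * ‖(xhat k ω - T (xhat k ω)) a‖ ^ 2 := by
      intro a
      have e1 := norm_sub_sq_real (x k ω a - xs a)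
        (η k ω • (xhat k ω a - T (xhat k ω) a))
      have e2 : (inner ℝ (x k ω a - xs a) (η k ω • (xhat k ω a - T (xhat k ω) a)) : ℝ)
          = η k ω * inner ℝ (x k ω a - xs a) (xhat k ω a - T (xhat k ω) a) :=
        real_inner_smul_right _ _ _
      have e3 : ‖η k ω • (xhat k ω a - T (xhat k ω) a)‖ ^ 2
          = (η k ω) ^ 2 * ‖xhat k ω a - T (xhat k ω) a‖ ^ 2 := by
        rw [norm_smul, mul_pow, Real.norm_eq_abs, sq_abs]
      have e4 : (x k ω - xs) a = x k ω a - xs a := rfl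
      have e5 : (xhat k ω - T (xhat k ω)) a = xhat k ω a - T (xhat k ω) a := rfl
      simp only [hGdef, e4, e5]
      rw [e1, e2, e3]
      ring
    rw [Finset.sum_congr rfl fun a _ => hterm a]
    rw [Finset.sum_add_distrib, Finset.sum_sub_distrib, Finset.sum_const,
      Finset.card_univ, Fintype.card_fin, nsmul_eq_mul]
    have i1 : ∑ a : Fin m, 2 * η k ω
        * (inner ℝ ((x k ω - xs) a) ((xhat k ω - T (xhat k ω)) a) : ℝ)
        = 2 * η k ω * inner ℝ (x k ω - xs) (xhat k ω - T (xhat k ω)) := by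
      rw [← Finset.mul_sum, PiLp.inner_apply]
    have i2 : ∑ a : Fin m, (η k ω) ^ 2 * ‖(xhat k ω - T (xhat k ω)) a‖ ^ 2
        = (η k ω) ^ 2 * ‖xhat k ω - T (xhat k ω)‖ ^ 2 := by
      rw [← Finset.mul_sum, PiLp.norm_sq_eq_of_L2]
    rw [i1, i2]
    field_simp
  -- value of the next iterate on each block event
  have hfG : ∀ (a : Fin m) (ω : Ω), idx k ω = a → ‖x (k+1) ω - xs‖ ^ 2 = G a ω := by
    intro a ω ha
    have e1 : ‖x (k+1) ω - xs‖ ^ 2 = ∑ l, ‖(x (k+1) ω - xs) l‖ ^ 2 :=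
      PiLp.norm_sq_eq_of_L2 _ _
    have e2 : ‖x k ω - xs‖ ^ 2 = ∑ l, ‖(x k ω - xs) l‖ ^ 2 :=
      PiLp.norm_sq_eq_of_L2 _ _
    have herase : ∀ l ∈ Finset.univ.erase a,
        ‖(x (k+1) ω - xs) l‖ ^ 2 = ‖(x k ω - xs) l‖ ^ 2 := by
      intro l hl
      have hne : l ≠ a := Finset.ne_of_mem_erase hl
      have hx1 : x (k+1) ω l = x k ω l := by
        rw [hrec k ω l, if_neg (by rw [ha]; exact hne)]
      show ‖x (k+1) ω l - xs l‖ ^ 2 = ‖x k ω l - xs l‖ ^ 2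
      rw [hx1]
    have hxa : (x (k+1) ω - xs) a
        = x k ω a - xs a - η k ω • (xhat k ω a - T (xhat k ω) a) := by
      show x (k+1) ω a - xs a = _
      rw [hrec k ω a, if_pos ha.symm]
      abel
    simp only [hGdef]
    rw [e1, e2, ← Finset.add_sum_erase _ _ (Finset.mem_univ a),
      ← Finset.add_sum_erase _ _ (Finset.mem_univ a),
      Finset.sum_congr rfl herase, hxa]
    have e4 : (x k ω - xs) a = x k ω a - xs a := rfl
    rw [e4]
    ring
  -- the block events
  set A : Fin m → Set Ω := fun a => {ω | idx k ω = a} with hAdef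
  have hA_meas : ∀ a, MeasurableSet (A a) := fun a =>
    (hidx_meas k) (measurableSet_singleton a)
  -- independence of idx k from F k
  have hle_idx : ∀ n, MeasurableSpace.comap (idx n) inferInstance
      ≤ ‹MeasurableSpace Ω› := fun n => (hidx_meas n).comap_le
  have hle_jv : ∀ n, MeasurableSpace.comap (jv n) inferInstance
      ≤ ‹MeasurableSpace Ω› := fun n => (hjv_meas n).comap_le
  have hFk_leG : F k ≤ (⨆ s ∈ Set.Iio k, MeasurableSpace.comap (idx s) inferInstance)
      ⊔ (⨆ n, MeasurableSpace.comap (jv n) inferInstance) := by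
    set 𝒢 := (⨆ s ∈ Set.Iio k, MeasurableSpace.comap (idx s) inferInstance)
      ⊔ (⨆ n, MeasurableSpace.comap (jv n) inferInstance) with h𝒢def
    have hjvG : ∀ n, Measurable[𝒢] (jv n) := fun n =>
      measurable_iff_comap_le.mpr (le_trans
        (le_iSup (fun n => MeasurableSpace.comap (jv n) inferInstance) n) le_sup_right)
    have hxG : ∀ t, t ≤ k → ∀ s, s ≤ t → Measurable[𝒢] (x s) := by
      intro t
      induction t with
      | zero =>
        intro _ s hs
        have hs0 : s = 0 := Nat.le_zero.mp hs
        subst hs0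
        have : x 0 = fun _ => x0 := funext hx0
        rw [this]
        exact measurable_const
      | succ n IH =>
        intro hnk s hs
        rcases Nat.lt_or_ge s (n+1) with h | h
        · exact IH (le_trans (Nat.le_succ n) hnk) s (Nat.lt_succ_iff.mp h)
        · have hs' : s = n + 1 := le_antisymm hs h
          subst hs'
          have hnk' : n < k := Nat.lt_of_succ_le hnk
          have hxsG : ∀ s, s ≤ n → Measurable[𝒢] (x s) :=
            IH (le_trans (Nat.le_succ n) hnk)
          have hFnG : F n ≤ 𝒢 := by
            rw [hF n]
            exact sup_le (iSup₂_le fun s hs => measurable_iff_comap_le.mp (hxsG s hs))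
              (iSup₂_le fun s _ => measurable_iff_comap_le.mp (hjvG s))
          have hηG : Measurable[𝒢] (η n) := (hη_meas n).mono hFnG le_rfl
          have hidxG : Measurable[𝒢] (idx n) :=
            measurable_iff_comap_le.mpr
              (le_trans (le_iSup₂ (f := fun s (_ : s ∈ Set.Iio k) =>
                MeasurableSpace.comap (idx s) inferInstance) n hnk') le_sup_left)
          have hxhatG : Measurable[𝒢] (xhat n) := by
            rw [arock_measurable_pilp_iff]
            intro l
            have heq : (fun ω => xhat n ω l) = fun ω => x (n - jv n ω l) ω l :=
              funext fun ω => hxhat n ω l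
            rw [heq]
            exact arock_measurable_select (fun j ω => x (n - j) ω l)
              (fun j => (arock_measurable_pilp_iff _).mp
                (hxsG (n - j) (Nat.sub_le n j)) l)
              (fun ω => jv n ω l) ((measurable_pi_apply l).comp (hjvG n))
          rw [arock_measurable_pilp_iff]
          intro i
          have heq : (fun ω => x (n+1) ω i) = fun ω =>
              if i = idx n ω then x n ω i - η n ω • (xhat n ω i - T (xhat n ω) i)
              else x n ω i := funext fun ω => hrec n ω i
          rw [heq]
          have hset : MeasurableSet[𝒢] {ω | i = idx n ω} := by
            have hseteq : {ω | i = idx n ω} = idx n ⁻¹' {i} := by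
              ext ω; simp [eq_comm]
            rw [hseteq]
            exact hidxG (measurableSet_singleton i)
          have hxni : Measurable[𝒢] fun ω => x n ω i :=
            (arock_measurable_pilp_iff _).mp (hxsG n le_rfl) i
          have hxhati : Measurable[𝒢] fun ω => xhat n ω i :=
            (arock_measurable_pilp_iff _).mp hxhatG i
          have hTxhati : Measurable[𝒢] fun ω => T (xhat n ω) i :=
            (arock_measurable_pilp_iff _).mp (hTm.comp hxhatG) i
          exact Measurable.ite hset
            (hxni.sub (hηG.smul (hxhati.sub hTxhati))) hxni
    rw [hF k]
    exact sup_le (iSup₂_le fun t ht => measurable_iff_comap_le.mp (hxG k le_rfl t ht))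
      (iSup₂_le fun s _ => measurable_iff_comap_le.mp (hjvG s))
  have hIndep : Indep (MeasurableSpace.comap (idx k) inferInstance) (F k) μ := by
    have h12 : Indep (MeasurableSpace.comap (idx k) inferInstance)
        (⨆ s ∈ Set.Iio k, MeasurableSpace.comap (idx s) inferInstance) μ := by
      have h := indep_iSup_of_disjoint
        (m := fun n => MeasurableSpace.comap (idx n) inferInstance)
        hle_idx hidx_indep (S := {k}) (T := Set.Iio k)
        (by simp [Set.disjoint_left])
      simpa using h
    have hbundle : Indep (⨆ n, MeasurableSpace.comap (idx n) inferInstance)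
        (⨆ n, MeasurableSpace.comap (jv n) inferInstance) μ := by
      have h : Indep (MeasurableSpace.comap (fun ω n => idx n ω) MeasurableSpace.pi)
          (MeasurableSpace.comap (fun ω n => jv n ω) MeasurableSpace.pi) μ := hindep
      rwa [arock_comap_pi, arock_comap_pi] at h
    have h123 : Indep ((MeasurableSpace.comap (idx k) inferInstance)
        ⊔ (⨆ s ∈ Set.Iio k, MeasurableSpace.comap (idx s) inferInstance))
        (⨆ n, MeasurableSpace.comap (jv n) inferInstance) μ :=
      indep_of_indep_of_le_left hbundle
        (sup_le (le_iSup (fun n => MeasurableSpace.comap (idx n) inferInstance) k)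
          (iSup₂_le fun s _ =>
            le_iSup (fun n => MeasurableSpace.comap (idx n) inferInstance) s))
    have hmain := arock_indep_sup_right (hle_idx k)
      (iSup₂_le fun s _ => hle_idx s) (iSup_le fun n => hle_jv n) h12 h123
    exact indep_of_indep_of_le_right hmain hFk_leG
  -- conditional expectation of the block indicators
  have hcond_ind : ∀ a : Fin m,
      μ[(A a).indicator (fun _ => (1:ℝ)) | F k] =ᵐ[μ] fun _ => (m:ℝ)⁻¹ := by
    intro a
    have hAm : MeasurableSet[MeasurableSpace.comap (idx k) inferInstance] (A a) :=
      ⟨{a}, measurableSet_singleton a, by ext ω; simp [hAdef]⟩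
    have hsm : StronglyMeasurable[MeasurableSpace.comap (idx k) inferInstance]
        ((A a).indicator (fun _ => (1:ℝ))) :=
      stronglyMeasurable_const.indicator hAm
    have h := condExp_indep_eq (hidx_meas k).comap_le hF_le hsm hIndep
    have hval : ∫ ω, (A a).indicator (fun _ => (1:ℝ)) ω ∂μ = (m:ℝ)⁻¹ := by
      rw [integral_indicator_const (1:ℝ) (hA_meas a)]
      have h2 : μ (A a) = ((m : ℝ≥0∞))⁻¹ := hidx_unif k a
      rw [measureReal_def, h2]
      simp
    rw [hval] at h
    exact h
  -- conditional expectation computation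
  set f : Ω → ℝ := fun ω => ‖x (k + 1) ω - xs‖ ^ 2 with hfdef
  have hcondexp : Integrable f μ →
      μ[f | F k] =ᵐ[μ] fun ω => ∑ a, G a ω * (m:ℝ)⁻¹ := by
    intro hint
    have hsplit : f = ∑ a, (A a).indicator f := by
      funext ω
      have h1 : (∑ a, (A a).indicator f) ω = ∑ a, (A a).indicator f ω :=
        Finset.sum_apply ω _ _
      rw [h1]
      simp only [Set.indicator_apply, hAdef, Set.mem_setOf_eq]
      rw [Finset.sum_ite_eq]
      simp
    have hIs : ∀ a ∈ Finset.univ, Integrable ((A a).indicator f) μ :=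
      fun a _ => hint.indicator (hA_meas a)
    have hstep1 : μ[f | F k] =ᵐ[μ] ∑ a, μ[(A a).indicator f | F k] := by
      have h : μ[∑ a, (A a).indicator f | F k]
          =ᵐ[μ] ∑ a, μ[(A a).indicator f | F k] := condExp_finsetSum hIs (F k)
      rw [← hsplit] at h
      exact h
    have hae : ∀ a : Fin m,
        μ[(A a).indicator f | F k] =ᵐ[μ] fun ω => G a ω * (m:ℝ)⁻¹ := by
      intro a
      have hprod : (A a).indicator f
          = G a * (A a).indicator (fun _ => (1:ℝ)) := by
        funext ω
        by_cases hω : ω ∈ A a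
        · have hidxa : idx k ω = a := hω
          simp only [Pi.mul_apply, Set.indicator_of_mem hω, mul_one]
          exact (hfG a ω hidxa).symm ▸ rfl
        · simp [Set.indicator_of_notMem hω]
      have hmul := condExp_mul_of_stronglyMeasurable_left
        ((hG_F a).stronglyMeasurable)
        (by rw [← hprod]; exact hint.indicator (hA_meas a))
        ((integrable_const (1:ℝ)).indicator (hA_meas a))
      rw [hprod]
      refine hmul.trans ?_
      filter_upwards [hcond_ind a] with ω hω
      simp only [Pi.mul_apply, hω]
    have hall : ∀ᵐ ω ∂μ, ∀ a : Fin m,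
        (μ[(A a).indicator f | F k]) ω = G a ω * (m:ℝ)⁻¹ :=
      (MeasureTheory.ae_all_iff).mpr hae
    filter_upwards [hstep1, hall] with ω h1 h2
    rw [h1, Finset.sum_apply ω _ _]
    exact Finset.sum_congr rfl fun a _ => h2 a
  -- the pointwise inequalities
  have hboth : ∀ ω : Ω,
      (‖x k ω - xs‖ ^ 2
        - (2 * η k ω / (m:ℝ)) * inner ℝ (x k ω - xs) (xhat k ω - T (xhat k ω))
        + ((η k ω) ^ 2 / (m:ℝ)) * ‖xhat k ω - T (xhat k ω)‖ ^ 2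
        ≤ ‖x k ω - xs‖ ^ 2
          + (1 / (m : ℝ)) * ∑ i ∈ Finset.range (Finset.univ.sup (jv k ω)),
              ε (i + 1) * ‖x (k - i) ω - x (k - i - 1) ω‖ ^ 2
          - (η k ω / m) * ‖xhat k ω - T (xhat k ω)‖ ^ 2
            * (1 - η k ω * (1 + ∑ i ∈ Finset.range (Finset.univ.sup (jv k ω)),
                (ε (i + 1))⁻¹)))
      ∧ (0 ≤ ‖x k ω - xs‖ ^ 2
          + (1 / (m : ℝ)) * ∑ i ∈ Finset.range (Finset.univ.sup (jv k ω)),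
              ε (i + 1) * ‖x (k - i) ω - x (k - i - 1) ω‖ ^ 2
          - (η k ω / m) * ‖xhat k ω - T (xhat k ω)‖ ^ 2
            * (1 - η k ω * (1 + ∑ i ∈ Finset.range (Finset.univ.sup (jv k ω)),
                (ε (i + 1))⁻¹))) := by
    intro ω
    set J := Finset.univ.sup (jv k ω) with hJdef
    set y : ℕ → PiLp 2 H := fun i => WithLp.toLp 2 (fun l =>
      if i < jv k ω l then x (k - i) ω l - x (k - i - 1) ω l else 0) with hydef
    set Δ : ℕ → PiLp 2 H := fun i => x (k - i) ω - x (k - i - 1) ω with hΔdef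
    have hy : x k ω - xhat k ω = ∑ i ∈ Finset.range J, y i := by
      ext l
      rw [arock_pilp_sum_apply]
      show x k ω l - xhat k ω l = _
      rw [hxhat k ω l]
      have hjJ : jv k ω l ≤ J := Finset.le_sup (Finset.mem_univ l)
      have h1 : ∑ i ∈ Finset.range J, y i l
          = ∑ i ∈ Finset.range (jv k ω l), (x (k - i) ω l - x (k - i - 1) ω l) := by
        rw [← Finset.sum_subset (Finset.range_subset_range.mpr hjJ)
          (fun i _ hni => by
            simp only [hydef]
            exact if_neg (by simpa using hni))]
        exact Finset.sum_congr rfl fun i hi => by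
          simp only [hydef]
          exact if_pos (by simpa using hi)
      rw [h1]
      simp only [Nat.sub_sub]
      exact (Finset.sum_range_sub' (f := fun i => x (k - i) ω l) (jv k ω l)).symm
    have hΔb : ∀ i ∈ Finset.range J, ‖y i‖ ≤ ‖Δ i‖ := by
      intro i _
      have h1 : ‖y i‖ ^ 2 ≤ ‖Δ i‖ ^ 2 := by
        rw [PiLp.norm_sq_eq_of_L2, PiLp.norm_sq_eq_of_L2]
        refine Finset.sum_le_sum fun l _ => ?_
        have hΔl : (Δ i) l = x (k - i) ω l - x (k - i - 1) ω l := rfl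
        by_cases hc : i < jv k ω l
        · have : y i l = x (k - i) ω l - x (k - i - 1) ω l := if_pos hc
          rw [this, hΔl]
        · have hy0 : y i l = 0 := if_neg hc
          rw [hy0, hΔl]
          simpa using sq_nonneg ‖x (k - i) ω l - x (k - i - 1) ω l‖
      calc ‖y i‖ = Real.sqrt (‖y i‖ ^ 2) := (Real.sqrt_sq (norm_nonneg _)).symm
        _ ≤ Real.sqrt (‖Δ i‖ ^ 2) := Real.sqrt_le_sqrt h1
        _ = ‖Δ i‖ := Real.sqrt_sq (norm_nonneg _)
    constructor
    · exact arock_core T hT xs hxs (x k ω) (xhat k ω) J y Δ hy hΔb ε hε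
        (η k ω) (hη_pos k ω) (m:ℝ) hm0
    · exact arock_rhs_nonneg T hT xs hxs (x k ω) (xhat k ω) J y Δ hy hΔb ε hε
        (η k ω) (hη_pos k ω) (m:ℝ) hm1
  -- conclude
  by_cases hint : Integrable f μ
  · filter_upwards [hcondexp hint] with ω hω
    rw [hω, ← Finset.sum_mul, hGsum ω]
    exact (hboth ω).1
  · have h0 : μ[f | F k] = 0 := condExp_of_not_integrable hint
    rw [h0]
    refine MeasureTheory.ae_of_all μ fun ω => ?_
    simpa using (hboth ω).2
end

section
/- (Norm convergence, deterministic case) Suppose the block indices i(k) are IID uniform on {1,…,m} and the delay vectors j⃗(k) form an arbitrary deterministic sequence in ℕ^m, independent of i(k), with lim inf_k j(k) < ∞. Let ε₁, ε₂, … ∈ (0,∞) with Σ_{l=1}^∞ ε_l < ∞, set c_i = Σ_{l=i}^∞ ε_l and h_j = (1 + c₁/m + Σ_{i=1}^j 1/ε_i)^{-1}, and use step size η^k = c·h_{j(k)} for arbitrary fixed c ∈ (0,1). Then with probability 1, ‖x^k − x*‖ converges (to a finite limit) simultaneously for every fixed point x* of T. -/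
open MeasureTheory ProbabilityTheory Filter Finset
open scoped ENNReal Topology

open scoped RealInnerProductSpace

private lemma arock_young_aux {e a b : ℝ} (he : 0 < e) :
    2 * (a * b) ≤ e * a ^ 2 + e⁻¹ * b ^ 2 := by
  have h : e * a ^ 2 + e⁻¹ * b ^ 2 - 2 * (a * b) = (e * a - b) ^ 2 / e := by
    field_simp; ring
  nlinarith [div_nonneg (sq_nonneg (e * a - b)) he.le]

private lemma arock_telescope_Ico {M : Type*} [AddCommGroup M] (f : ℕ → M) {a b : ℕ}
    (hab : a ≤ b) : ∑ d ∈ Finset.Ico a b, (f (d + 1) - f d) = f b - f a := by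
  rw [Finset.sum_Ico_eq_sub _ hab, Finset.sum_range_sub, Finset.sum_range_sub]
  abel

private lemma arock_coord_norm_le {ι : Type*} [Fintype ι] {H : ι → Type*}
    [∀ i, SeminormedAddCommGroup (H i)] (y : PiLp 2 H) (i : ι) : ‖y i‖ ≤ ‖y‖ := by
  have h1 : ‖y i‖ ^ 2 ≤ ‖y‖ ^ 2 := by
    rw [PiLp.norm_sq_eq_of_L2]
    exact Finset.single_le_sum (f := fun j => ‖y j‖ ^ 2) (fun j _ => sq_nonneg _)
      (Finset.mem_univ i)
  nlinarith [norm_nonneg y, norm_nonneg (y i)]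

private lemma arock_coco {E : Type*} [NormedAddCommGroup E] [InnerProductSpace ℝ E]
    {T : E → E} (hT : LipschitzWith 1 T) {xs : E} (hxs : T xs = xs) (y : E) :
    ‖y - T y‖ ^ 2 ≤ 2 * ⟪y - xs, y - T y⟫ := by
  have h1 : ‖T y - xs‖ ≤ ‖y - xs‖ := by
    have := hT.dist_le_mul y xs
    simpa [hxs, dist_eq_norm] using this
  have h2 : ‖T y - xs‖ ^ 2 ≤ ‖y - xs‖ ^ 2 := by
    nlinarith [norm_nonneg (T y - xs), norm_nonneg (y - xs)]
  have h3 : T y - xs = (y - xs) - (y - T y) := by abel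
  rw [h3, norm_sub_sq_real] at h2
  linarith

private lemma arock_factor_through {Ω γ β : Type*} [Nonempty β] {f : Ω → β} {π : Ω → γ}
    (h : ∀ ω ω', π ω = π ω' → f ω = f ω') : ∃ φ : γ → β, ∀ ω, f ω = φ (π ω) := by
  classical
  refine ⟨fun v => if h' : ∃ ω, π ω = v then f h'.choose else Classical.arbitrary β, fun ω => ?_⟩
  have h' : ∃ ω', π ω' = π ω := ⟨ω, rfl⟩
  have heq : (fun v => if h' : ∃ ω, π ω = v then f h'.choose else Classical.arbitrary β) (π ω)
      = f h'.choose := dif_pos h'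
  rw [heq]
  exact h ω h'.choose h'.choose_spec.symm

private lemma arock_tail_conv (g cc : ℕ → ℝ) (hg0 : ∀ d, 0 ≤ g d) (hg : Summable g)
    (hanti : Antitone cc) (hcc0 : Tendsto cc atTop (𝓝 0)) (hccnn : ∀ n, 0 ≤ cc n) :
    Tendsto (fun k => ∑ d ∈ Finset.range k, cc (k - d) * g d) atTop (𝓝 0) := by
  have hGnn : 0 ≤ ∑' d, g d := tsum_nonneg hg0
  set G : ℝ := ∑' d, g d with hG
  -- tails of g tend to zero
  have htail_eq : ∀ n : ℕ, (∑' d, g (d + n)) = G - ∑ i ∈ Finset.range n, g i := by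
    intro n
    have h := Summable.sum_add_tsum_nat_add (f := g) n hg
    linarith
  have htail : Tendsto (fun n => ∑' d, g (d + n)) atTop (𝓝 0) := by
    simp_rw [htail_eq]
    simpa [← hG] using (tendsto_const_nhds (x := G)).sub hg.hasSum.tendsto_sum_nat
  rw [Metric.tendsto_atTop]
  intro e he
  have hb1 : 0 < e / (2 * (cc 0 + 1)) := div_pos he (by nlinarith [hccnn 0])
  obtain ⟨N₁, hN₁⟩ : ∃ N₁, (∑' d, g (d + N₁)) < e / (2 * (cc 0 + 1)) := by
    rcases (htail.eventually (gt_mem_nhds hb1)).exists with ⟨N₁, h⟩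
    exact ⟨N₁, h⟩
  have hb2 : 0 < e / (2 * (G + 1)) := div_pos he (by nlinarith)
  obtain ⟨M, hM⟩ : ∃ M, ∀ n ≥ M, cc n < e / (2 * (G + 1)) := by
    rcases (hcc0.eventually (gt_mem_nhds hb2)).exists_forall_of_atTop with ⟨M, h⟩
    exact ⟨M, fun n hn => by simpa using h n hn⟩
  refine ⟨N₁ + M + 1, fun k hk => ?_⟩
  have hN₁k : N₁ ≤ k := by omega
  have htnn : 0 ≤ ∑ d ∈ Finset.range k, cc (k - d) * g d :=
    Finset.sum_nonneg fun d _ => mul_nonneg (hccnn _) (hg0 d)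
  rw [Real.dist_eq, sub_zero, abs_of_nonneg htnn]
  -- split the sum
  have hsplit : ∑ d ∈ Finset.range k, cc (k - d) * g d =
      (∑ d ∈ Finset.range N₁, cc (k - d) * g d) +
        ∑ d ∈ Finset.Ico N₁ k, cc (k - d) * g d := by
    rw [Finset.range_eq_Ico, ← Finset.sum_Ico_consecutive _ (Nat.zero_le N₁) hN₁k, Finset.range_eq_Ico]
  have hpart1 : (∑ d ∈ Finset.range N₁, cc (k - d) * g d) ≤ cc (k - N₁ + 1) * G := by
    calc (∑ d ∈ Finset.range N₁, cc (k - d) * g d)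
        ≤ ∑ d ∈ Finset.range N₁, cc (k - N₁ + 1) * g d := by
          refine Finset.sum_le_sum fun d hd => ?_
          have hd' := Finset.mem_range.1 hd
          exact mul_le_mul_of_nonneg_right (hanti (by omega)) (hg0 d)
      _ = cc (k - N₁ + 1) * ∑ d ∈ Finset.range N₁, g d := by rw [Finset.mul_sum]
      _ ≤ cc (k - N₁ + 1) * G :=
          mul_le_mul_of_nonneg_left (Summable.sum_le_tsum _ (fun d _ => hg0 d) hg) (hccnn _)
  have hpart2 : (∑ d ∈ Finset.Ico N₁ k, cc (k - d) * g d) ≤ cc 0 * (∑' d, g (d + N₁)) := by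
    calc (∑ d ∈ Finset.Ico N₁ k, cc (k - d) * g d)
        ≤ ∑ d ∈ Finset.Ico N₁ k, cc 0 * g d := by
          refine Finset.sum_le_sum fun d hd => ?_
          exact mul_le_mul_of_nonneg_right (hanti (Nat.zero_le _)) (hg0 d)
      _ = cc 0 * ∑ d ∈ Finset.Ico N₁ k, g d := by rw [Finset.mul_sum]
      _ ≤ cc 0 * (∑' d, g (d + N₁)) := by
          refine mul_le_mul_of_nonneg_left ?_ (hccnn 0)
          rw [Finset.sum_Ico_eq_sum_range]
          have hs : Summable fun d => g (N₁ + d) :=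
            ((summable_nat_add_iff N₁).2 hg).congr fun t => by rw [Nat.add_comm]
          calc ∑ i ∈ Finset.range (k - N₁), g (N₁ + i) ≤ ∑' d, g (N₁ + d) :=
                Summable.sum_le_tsum _ (fun d _ => hg0 _) hs
            _ = ∑' d, g (d + N₁) := tsum_congr fun d => by rw [Nat.add_comm]
  have hcc_small : cc (k - N₁ + 1) * G < e / 2 := by
    have h1 : cc (k - N₁ + 1) < e / (2 * (G + 1)) := hM _ (by omega)
    have h2 : 0 ≤ cc (k - N₁ + 1) := hccnn _
    have h3 : cc (k - N₁ + 1) * G ≤ cc (k - N₁ + 1) * (G + 1) := by nlinarith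
    have h4 : cc (k - N₁ + 1) * (G + 1) < (e / (2 * (G + 1))) * (G + 1) := by
      have : (0:ℝ) < G + 1 := by linarith
      exact mul_lt_mul_of_pos_right h1 this
    have h5 : (e / (2 * (G + 1))) * (G + 1) = e / 2 := by
      field_simp
    linarith
  have htail_small : cc 0 * (∑' d, g (d + N₁)) ≤ e / 2 := by
    have h0 : 0 ≤ ∑' d, g (d + N₁) := tsum_nonneg fun d => hg0 _
    have h1 : cc 0 * (∑' d, g (d + N₁)) ≤ cc 0 * (e / (2 * (cc 0 + 1))) := by
      exact mul_le_mul_of_nonneg_left hN₁.le (hccnn 0)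
    have h2 : cc 0 * (e / (2 * (cc 0 + 1))) ≤ e / 2 := by
      rw [mul_div_assoc', div_le_div_iff₀ (by nlinarith [hccnn 0]) (by norm_num)]
      nlinarith [hccnn 0]
    linarith
  rw [hsplit]
  linarith

set_option maxHeartbeats 2000000 in
/-- **Norm convergence, deterministic case.** Under IID uniform blocks and an arbitrary
deterministic delay sequence with `lim inf j(k) < ∞`, with `∑ εₗ < ∞`, coefficients
`cᵢ = ∑_{l=i}^∞ εₗ`, `h_j = (1 + c₁/m + ∑_{i=1}^j 1/εᵢ)⁻¹` and step size
`η^k = c·h_{j(k)}`, `c ∈ (0,1)`: with probability 1, `‖x^k − x*‖` converges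
simultaneously for every fixed point `x*` of `T`. -/
theorem arock_norm_convergence_deterministic
    {m : ℕ} (hm : 0 < m)
    {H : Fin m → Type*} [∀ i, NormedAddCommGroup (H i)]
    [∀ i, InnerProductSpace ℝ (H i)] [∀ i, CompleteSpace (H i)]
    [∀ i, SecondCountableTopology (H i)]
    [MeasurableSpace (PiLp 2 H)] [BorelSpace (PiLp 2 H)]
    (T : PiLp 2 H → PiLp 2 H) (hT : LipschitzWith 1 T) (hfix : ∃ z, T z = z)
    {Ω : Type*} [MeasurableSpace Ω] (μ : Measure Ω) [IsProbabilityMeasure μ]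
    -- block indices: IID uniform
    (idx : ℕ → Ω → Fin m)
    (hidx_meas : ∀ k, Measurable (idx k))
    (hidx_unif : ∀ k a, μ {ω | idx k ω = a} = ((m : ℝ≥0∞))⁻¹)
    (hidx_indep : iIndepFun idx μ)
    -- deterministic delay vectors, with finite liminf of the current delay
    (jv : ℕ → Fin m → ℕ)
    (hliminf : Filter.liminf (fun k => ((Finset.univ.sup (jv k) : ℕ) : ℕ∞)) atTop < ⊤)
    -- parameters ε₁, ε₂, … ∈ (0,∞) with ∑ εₗ < ∞ and coefficients cᵢ = ∑_{l=i}^∞ εₗ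
    (ε : ℕ → ℝ) (hε : ∀ i, 0 < ε i)
    (hsum : Summable fun l : ℕ => ε (l + 1))
    (cc : ℕ → ℝ) (hcc : ∀ i, cc i = ∑' t : ℕ, ε (i + t))
    -- step sizes η^k ≤ h_{j(k)} where h_j = (1 + c₁/m + ∑_{i=1}^j 1/εᵢ)⁻¹
    (hj : ℕ → ℝ)
    (hhj : ∀ j, hj j = (1 + cc 1 / (m : ℝ) + ∑ i ∈ Finset.range j, (ε (i + 1))⁻¹)⁻¹)
    (c : ℝ) (hc : c ∈ Set.Ioo (0 : ℝ) 1)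
    (η : ℕ → ℝ) (hη : ∀ k, η k = c * hj (Finset.univ.sup (jv k)))
    -- the iterates
    (x : ℕ → Ω → PiLp 2 H) (x0 : PiLp 2 H) (hx0 : ∀ ω, x 0 ω = x0)
    (hx_meas : ∀ k, Measurable (x k))
    -- the delayed iterate x̂^k = x^{k−j⃗(k)} (with x^n = x^0 for n < 0)
    (xhat : ℕ → Ω → PiLp 2 H)
    (hxhat : ∀ (k : ℕ) (ω : Ω) (l : Fin m), xhat k ω l = x (k - jv k l) ω l)
    -- the ARock recursion
    (hrec : ∀ (k : ℕ) (ω : Ω) (i : Fin m),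
      x (k + 1) ω i = if i = idx k ω then
          x k ω i - η k • (xhat k ω i - T (xhat k ω) i)
        else x k ω i) :
    -- conclusion: a.s., ‖x^k − x*‖ converges for every fixed point x* of T
    ∀ᵐ ω ∂μ, ∀ xs : PiLp 2 H, T xs = xs →
      ∃ r : ℝ, Filter.Tendsto (fun k => ‖x k ω - xs‖) Filter.atTop (𝓝 r) := by
  classical
  obtain ⟨hc0, hc1⟩ := hc
  have hm' : (0:ℝ) < m := by exact_mod_cast hm
  have hm0 : ((m:ℝ)) ≠ 0 := hm'.ne'
  -- ### basic facts about ε, cc, hj, η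
  have hsum0 : Summable ε := (summable_nat_add_iff 1).1 hsum
  have hsum_shift : ∀ i : ℕ, Summable fun t : ℕ => ε (i + t) := fun i =>
    ((summable_nat_add_iff i).2 hsum0).congr fun t => by rw [Nat.add_comm]
  have hcc_nonneg : ∀ i, 0 ≤ cc i := fun i => by
    rw [hcc]; exact tsum_nonneg fun t => (hε _).le
  have hcc_succ : ∀ i, cc i = ε i + cc (i + 1) := by
    intro i
    rw [hcc, hcc, Summable.tsum_eq_zero_add (hsum_shift i)]
    refine congrArg₂ (· + ·) (by norm_num) (tsum_congr fun t => by congr 1; omega)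
  have hcc_anti : Antitone cc := antitone_nat_of_succ_le fun n => by
    have h := hcc_succ n; nlinarith [hε n]
  have hcc_tendsto : Tendsto cc atTop (𝓝 0) := by
    have key : ∀ n : ℕ, cc (n + 1) = (∑' l, ε (l + 1)) - ∑ i ∈ Finset.range n, ε (i + 1) := by
      intro n
      have h := Summable.sum_add_tsum_nat_add (f := fun l => ε (l + 1)) n hsum
      have h2 : cc (n+1) = ∑' l, ε (l + n + 1) := by
        rw [hcc]; exact tsum_congr fun t => by congr 1; omega
      rw [h2]; linarith [h]
    have h1 : Tendsto (fun n => cc (n + 1)) atTop (𝓝 0) := by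
      simp_rw [key]
      simpa using (tendsto_const_nhds (x := (∑' l, ε (l + 1)))).sub hsum.hasSum.tendsto_sum_nat
    exact (tendsto_add_atTop_iff_nat 1).1 h1
  have hD_pos : ∀ j : ℕ, 0 < 1 + cc 1 / (m:ℝ) + ∑ i ∈ Finset.range j, (ε (i+1))⁻¹ := by
    intro j
    have h1 : 0 ≤ cc 1 / (m:ℝ) := div_nonneg (hcc_nonneg 1) hm'.le
    have h2 : 0 ≤ ∑ i ∈ Finset.range j, (ε (i+1))⁻¹ :=
      Finset.sum_nonneg fun i _ => inv_nonneg.2 (hε _).le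
    linarith
  have hη_pos : ∀ k, 0 < η k := fun k => by
    rw [hη, hhj]; exact mul_pos hc0 (inv_pos.2 (hD_pos _))
  have hη_le_one : ∀ k, η k ≤ 1 := by
    intro k
    rw [hη, hhj]
    have h1 : 0 ≤ cc 1 / (m:ℝ) := div_nonneg (hcc_nonneg 1) hm'.le
    have h2 : 0 ≤ ∑ i ∈ Finset.range (Finset.univ.sup (jv k)), (ε (i+1))⁻¹ :=
      Finset.sum_nonneg fun i _ => inv_nonneg.2 (hε _).le
    have hD1 : 1 ≤ 1 + cc 1 / (m:ℝ) + ∑ i ∈ Finset.range (Finset.univ.sup (jv k)), (ε (i+1))⁻¹ := by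
      linarith
    have h3 := inv_le_one_of_one_le₀ hD1
    nlinarith
  have hη_id : ∀ k, η k * (1 + cc 1 / (m:ℝ)
      + ∑ i ∈ Finset.range (Finset.univ.sup (jv k)), (ε (i+1))⁻¹) = c := by
    intro k
    rw [hη, hhj, mul_assoc, inv_mul_cancel₀ (hD_pos _).ne', mul_one]
  -- ### the determinism machinery
  obtain ⟨π, hπ⟩ : ∃ π : (k : ℕ) → Ω → (Fin k → Fin m), ∀ k ω i, π k ω i = idx i ω :=
    ⟨fun k ω i => idx i ω, fun _ _ _ => rfl⟩
  have hπmeas : ∀ k, Measurable (π k) := fun k =>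
    measurable_pi_lambda _ fun i => by simp only [hπ]; exact hidx_meas i
  have hrestrict : ∀ {k k' : ℕ}, k ≤ k' → ∀ {ω ω'}, π k' ω = π k' ω' → π k ω = π k ω' := by
    intro k k' hkk' ω ω' h
    funext i
    rw [hπ, hπ]
    have h2 := congrFun h (Fin.castLE hkk' i)
    rw [hπ, hπ] at h2
    exact h2
  have hxdet : ∀ k, ∀ {ω ω'}, π k ω = π k ω' → x k ω = x k ω' := by
    intro k
    induction k using Nat.strong_induction_on with
    | _ k ih =>
      rcases k with _ | k
      · intro ω ω' _; rw [hx0, hx0]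
      · intro ω ω' hagree
        have hidxk : idx k ω = idx k ω' := by
          have h2 := congrFun hagree ⟨k, Nat.lt_succ_self k⟩
          rwa [hπ, hπ] at h2
        have hxd : ∀ d, d ≤ k → x d ω = x d ω' := fun d hd =>
          ih d (Nat.lt_succ_of_le hd) (hrestrict (Nat.le_succ_of_le hd) hagree)
        have hxhatk : xhat k ω = xhat k ω' := by
          ext l
          rw [hxhat, hxhat, congrArg (fun v => v l) (hxd _ (Nat.sub_le k (jv k l)))]
        ext i
        rw [hrec, hrec, hidxk, hxhatk, congrArg (fun v => v i) (hxd k le_rfl)]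
  have hxhatdet : ∀ k, ∀ {ω ω'}, π k ω = π k ω' → xhat k ω = xhat k ω' := by
    intro k ω ω' h
    ext l
    rw [hxhat, hxhat, congrArg (fun v => v l) (hxdet _ (hrestrict (Nat.sub_le k (jv k l)) h))]
  -- the filtration
  obtain ⟨F, hFdef⟩ : ∃ F : ℕ → MeasurableSpace Ω,
      ∀ k, F k = MeasurableSpace.comap (π k) MeasurableSpace.pi := ⟨_, fun _ => rfl⟩
  have hFle : ∀ k, F k ≤ ‹MeasurableSpace Ω› := fun k => by
    rw [hFdef]; exact (hπmeas k).comap_le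
  have hFmono : Monotone F := by
    intro k k' hkk'
    rw [hFdef, hFdef]
    have hcomp : π k = (fun (v : Fin k' → Fin m) (i : Fin k) => v (Fin.castLE hkk' i)) ∘ π k' := by
      funext ω i
      simp [Function.comp_apply, hπ]
    rw [hcomp, ← MeasurableSpace.comap_comp]
    exact MeasurableSpace.comap_mono (measurable_of_countable _).comap_le
  obtain ⟨ℱ, hℱ⟩ : ∃ ℱ : Filtration ℕ ‹MeasurableSpace Ω›, ∀ k, ℱ k = F k :=
    ⟨⟨F, hFmono, hFle⟩, fun _ => rfl⟩
  -- measurability and integrability from determinism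
  have hkey : ∀ (k : ℕ) (f : Ω → ℝ), (∀ {ω ω'}, π k ω = π k ω' → f ω = f ω') →
      Measurable[F k] f ∧ Integrable f μ := by
    intro k f hdet
    obtain ⟨φ, hφ⟩ := arock_factor_through (f := f) (π := π k) fun ω ω' h => hdet h
    have hφm : Measurable φ := measurable_of_countable φ
    have hmeas : Measurable[F k] f := by
      rw [hFdef]
      have h2 : f = φ ∘ π k := funext hφ
      rw [h2]
      exact hφm.comp (Measurable.of_comap_le le_rfl)
    refine ⟨hmeas, ?_⟩
    have hmeas0 : Measurable f := hmeas.mono (hFle k) le_rfl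
    have hbd : ∀ ω, ‖f ω‖ ≤ ∑ v : Fin k → Fin m, ‖φ v‖ := by
      intro ω
      rw [hφ ω]
      exact Finset.single_le_sum (f := fun v => ‖φ v‖) (fun v _ => norm_nonneg _)
        (Finset.mem_univ _)
    exact (integrable_const _).mono' hmeas0.aestronglyMeasurable (Eventually.of_forall hbd)
  -- conditional expectation of the indicator of `idx k = a`
  have hindicator : ∀ (k : ℕ) (a : Fin m),
      μ[(fun ω => if idx k ω = a then (1:ℝ) else 0) | F k] =ᵐ[μ] fun _ => (m:ℝ)⁻¹ := by
    intro k a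
    have hS : IndepFun (fun ω (i : ↥({k} : Finset ℕ)) => idx i ω)
        (fun ω (i : ↥(Finset.range k : Finset ℕ)) => idx i ω) μ :=
      hidx_indep.indepFun_finset {k} (Finset.range k)
        (by simp [Finset.disjoint_left]) hidx_meas
    have hS2 := (IndepFun_iff_Indep _ _ _).1 hS
    have hle1 : MeasurableSpace.comap (idx k) inferInstance ≤
        MeasurableSpace.comap (fun ω (i : ↥({k} : Finset ℕ)) => idx i ω) MeasurableSpace.pi := by
      have hcomp : idx k = (fun v : ↥({k} : Finset ℕ) → Fin m =>
          v ⟨k, Finset.mem_singleton_self k⟩) ∘ (fun ω (i : ↥({k} : Finset ℕ)) => idx i ω) := rfl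
      rw [hcomp, ← MeasurableSpace.comap_comp]
      exact MeasurableSpace.comap_mono (measurable_of_countable _).comap_le
    have hle2 : F k ≤ MeasurableSpace.comap
        (fun ω (i : ↥(Finset.range k : Finset ℕ)) => idx i ω) MeasurableSpace.pi := by
      rw [hFdef]
      have hcomp : π k = (fun (v : ↥(Finset.range k : Finset ℕ) → Fin m) (i : Fin k) =>
          v ⟨(i : ℕ), Finset.mem_range.2 i.2⟩) ∘
            (fun ω (i : ↥(Finset.range k : Finset ℕ)) => idx i ω) := by
        funext ω i
        rw [hπ]
        rfl
      rw [hcomp, ← MeasurableSpace.comap_comp]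
      exact MeasurableSpace.comap_mono (measurable_of_countable _).comap_le
    have hindep : Indep (MeasurableSpace.comap (idx k) inferInstance) (F k) μ :=
      indep_of_indep_of_le_right (indep_of_indep_of_le_left hS2 hle1) hle2
    have hsm : StronglyMeasurable[MeasurableSpace.comap (idx k) inferInstance]
        (fun ω => if idx k ω = a then (1:ℝ) else 0) := by
      have h2 : (fun ω => if idx k ω = a then (1:ℝ) else 0) =
          (fun b : Fin m => if b = a then (1:ℝ) else 0) ∘ idx k := rfl
      rw [h2]
      exact ((measurable_of_countable _).comp (Measurable.of_comap_le le_rfl)).stronglyMeasurable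
    have h := condExp_indep_eq ((hidx_meas k).comap_le) (hFle k) hsm hindep
    have hint : (∫ ω, (if idx k ω = a then (1:ℝ) else 0) ∂μ) = (m:ℝ)⁻¹ := by
      have h2 : (fun ω => if idx k ω = a then (1:ℝ) else 0) =
          Set.indicator {ω | idx k ω = a} (fun _ => (1:ℝ)) := by
        funext ω; simp [Set.indicator_apply, Set.mem_setOf_eq]
      rw [h2, integral_indicator_const]
      · rw [measureReal_def, hidx_unif k a]
        simp [ENNReal.toReal_inv]
      · exact (hidx_meas k) (measurableSet_singleton a)
    refine h.trans ?_
    rw [hint]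
  -- ### the global processes
  obtain ⟨sfun, hsfun⟩ : ∃ sfun : ℕ → Ω → PiLp 2 H,
      ∀ k ω, sfun k ω = xhat k ω - T (xhat k ω) := ⟨_, fun _ _ => rfl⟩
  obtain ⟨g, hg⟩ : ∃ g : ℕ → Ω → ℝ, ∀ d ω, g d ω = ‖x (d+1) ω - x d ω‖ ^ 2 :=
    ⟨_, fun _ _ => rfl⟩
  obtain ⟨δ, hδ⟩ : ∃ δ : ℕ → Ω → ℝ, ∀ k ω, δ k ω = η k * ‖sfun k ω‖ ^ 2 :=
    ⟨_, fun _ _ => rfl⟩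
  have hsdet : ∀ k, ∀ {ω ω'}, π k ω = π k ω' → sfun k ω = sfun k ω' := fun k _ _ h => by
    rw [hsfun, hsfun, hxhatdet k h]
  have hgdet : ∀ d, ∀ {ω ω'}, π (d+1) ω = π (d+1) ω' → g d ω = g d ω' := fun d _ _ h => by
    rw [hg, hg, hxdet (d+1) h, hxdet d (hrestrict (Nat.le_succ d) h)]
  have hδdet : ∀ k, ∀ {ω ω'}, π k ω = π k ω' → δ k ω = δ k ω' := fun k _ _ h => by
    rw [hδ, hδ, hsdet k h]
  have hgnn : ∀ d ω, 0 ≤ g d ω := fun d ω => by rw [hg]; positivity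
  have hδnn : ∀ k ω, 0 ≤ δ k ω := fun k ω => by
    rw [hδ]; exact mul_nonneg (hη_pos k).le (sq_nonneg _)
  have hδint : ∀ k, Integrable (δ k) μ := fun k => (hkey k _ (fun h => hδdet k h)).2
  have hδmeas : ∀ k, Measurable (δ k) := fun k =>
    ((hkey k _ (fun h => hδdet k h)).1).mono (hFle k) le_rfl
  -- coordinates of the increments
  have hΔcoord : ∀ k ω (i : Fin m), x (k+1) ω i - x k ω i =
      if i = idx k ω then -(η k • sfun k ω i) else 0 := by
    intro k ω i
    rw [hrec]
    by_cases hi : i = idx k ω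
    · rw [if_pos hi, if_pos hi]
      have h2 : sfun k ω i = xhat k ω i - T (xhat k ω) i := by rw [hsfun]; rfl
      rw [h2]
      abel
    · rw [if_neg hi, if_neg hi, sub_self]
  have hgval : ∀ k ω, g k ω = (η k)^2 * ‖sfun k ω (idx k ω)‖^2 := by
    intro k ω
    rw [hg, PiLp.norm_sq_eq_of_L2]
    calc ∑ i, ‖(x (k+1) ω - x k ω) i‖^2
        = ∑ i, (if i = idx k ω then (η k)^2 * ‖sfun k ω (idx k ω)‖^2 else 0) := by
          refine Finset.sum_congr rfl fun i _ => ?_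
          rw [PiLp.sub_apply, hΔcoord]
          by_cases hi : i = idx k ω
          · rw [if_pos hi, if_pos hi, norm_neg, norm_smul, hi, mul_pow,
              Real.norm_eq_abs, sq_abs]
          · rw [if_neg hi, if_neg hi, norm_zero]
            ring
      _ = (η k)^2 * ‖sfun k ω (idx k ω)‖^2 := by
          rw [Finset.sum_ite_eq' Finset.univ (idx k ω)]
          simp
  -- single-support bound for cross terms
  have hcross_coord : ∀ d k ω, (∑ i, ‖x (d+1) ω i - x d ω i‖ * ‖sfun k ω i‖)
      ≤ ‖x (d+1) ω - x d ω‖ * ‖sfun k ω‖ := by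
    intro d k ω
    have hzero : ∀ i, i ≠ idx d ω → ‖x (d+1) ω i - x d ω i‖ * ‖sfun k ω i‖ = 0 := by
      intro i hi
      rw [hΔcoord, if_neg hi, norm_zero, zero_mul]
    rw [Finset.sum_eq_single (idx d ω) (fun i _ hi => hzero i hi)
      (fun h => absurd (Finset.mem_univ _) h)]
    have h1 : ‖x (d+1) ω (idx d ω) - x d ω (idx d ω)‖ ≤ ‖x (d+1) ω - x d ω‖ := by
      have := arock_coord_norm_le (x (d+1) ω - x d ω) (idx d ω)
      rwa [PiLp.sub_apply] at this
    have h2 : ‖sfun k ω (idx d ω)‖ ≤ ‖sfun k ω‖ := arock_coord_norm_le _ _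
    exact mul_le_mul h1 h2 (norm_nonneg _) (norm_nonneg _)
  -- ### the Lyapunov process, for a fixed point xs
  obtain ⟨Ξ, hΞ⟩ : ∃ Ξ : PiLp 2 H → ℕ → Ω → ℝ, ∀ xs k ω, Ξ xs k ω =
      ‖x k ω - xs‖^2 + (m:ℝ)⁻¹ * ∑ d ∈ Finset.range k, cc (k - d) * g d ω :=
    ⟨_, fun _ _ _ => rfl⟩
  have core : ∀ xs : PiLp 2 H, T xs = xs →
      (∀ᵐ ω ∂μ, ∃ L : ℝ, Tendsto (fun k => Ξ xs k ω) atTop (𝓝 L)) ∧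
      (∀ n : ℕ, ∑ k ∈ Finset.range n, ((1-c) * (m:ℝ)⁻¹) * ∫ ω, δ k ω ∂μ ≤ ‖x0 - xs‖^2) := by
    intro xs hxs
    have hΞdet : ∀ k, ∀ {ω ω'}, π k ω = π k ω' → Ξ xs k ω = Ξ xs k ω' := by
      intro k ω ω' h
      rw [hΞ, hΞ, hxdet k h]
      refine congrArg₂ (· + ·) rfl (congrArg _ (Finset.sum_congr rfl fun d hd => ?_))
      rw [hgdet d (hrestrict (Nat.succ_le_of_lt (Finset.mem_range.1 hd)) h)]
    have hΞmeas : ∀ k, Measurable[F k] (Ξ xs k) := fun k => (hkey k _ (fun h => hΞdet k h)).1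
    have hΞint : ∀ k, Integrable (Ξ xs k) μ := fun k => (hkey k _ (fun h => hΞdet k h)).2
    have hΞnn : ∀ k ω, 0 ≤ Ξ xs k ω := by
      intro k ω
      rw [hΞ]
      have h1 : 0 ≤ ∑ d ∈ Finset.range k, cc (k-d) * g d ω :=
        Finset.sum_nonneg fun d _ => mul_nonneg (hcc_nonneg _) (hgnn d ω)
      have h2 : (0:ℝ) ≤ (m:ℝ)⁻¹ := inv_nonneg.2 hm'.le
      nlinarith [sq_nonneg ‖x k ω - xs‖]
    -- the conditional one-step functions
    obtain ⟨G, hG⟩ : ∃ G : ℕ → Fin m → Ω → ℝ, ∀ k a ω, G k a ω =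
        ‖x k ω - xs‖^2 - 2 * η k * ⟪x k ω a - xs a, sfun k ω a⟫ + (η k)^2 * ‖sfun k ω a‖^2
          + (m:ℝ)⁻¹ * (cc 1 * ((η k)^2 * ‖sfun k ω a‖^2)
            + ∑ d ∈ Finset.range k, cc (k + 1 - d) * g d ω) := ⟨_, fun _ _ _ => rfl⟩
    have hGdet : ∀ k a, ∀ {ω ω'}, π k ω = π k ω' → G k a ω = G k a ω' := by
      intro k a ω ω' h
      rw [hG, hG, hxdet k h, hsdet k h]
      refine congrArg₂ (· + ·) rfl (congrArg _ (congrArg _ (Finset.sum_congr rfl fun d hd => ?_)))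
      rw [hgdet d (hrestrict (Nat.succ_le_of_lt (Finset.mem_range.1 hd)) h)]
    have hGmeasF : ∀ k a, Measurable[F k] (G k a) := fun k a => (hkey k _ (fun h => hGdet k a h)).1
    have hGint : ∀ k a, Integrable (G k a) μ := fun k a => (hkey k _ (fun h => hGdet k a h)).2
    -- one-step identity
    have hstep : ∀ k ω, Ξ xs (k+1) ω = G k (idx k ω) ω := by
      intro k ω
      rw [hΞ, hG]
      have hXcoord : ∀ i, (x (k+1) ω - xs) i = (x k ω - xs) i
          + (if i = idx k ω then -(η k • sfun k ω i) else 0) := by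
        intro i
        rw [PiLp.sub_apply, PiLp.sub_apply, ← hΔcoord k ω i]
        abel
      have hterm : ∀ i, ‖(x (k+1) ω - xs) i‖^2 = ‖(x k ω - xs) i‖^2 +
          (if i = idx k ω then
            (- (2 * η k * ⟪x k ω (idx k ω) - xs (idx k ω), sfun k ω (idx k ω)⟫)
              + (η k)^2 * ‖sfun k ω (idx k ω)‖^2) else 0) := by
        intro i
        by_cases hi : i = idx k ω
        · subst hi
          rw [hXcoord (idx k ω), if_pos rfl, if_pos rfl, ← sub_eq_add_neg, norm_sub_sq_real,
            real_inner_smul_right, norm_smul, Real.norm_eq_abs, mul_pow, sq_abs,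
            PiLp.sub_apply]
          ring
        · rw [hXcoord i, if_neg hi, if_neg hi, add_zero, add_zero]
      have hnorm : ‖x (k+1) ω - xs‖^2 = ‖x k ω - xs‖^2
          - 2 * η k * ⟪x k ω (idx k ω) - xs (idx k ω), sfun k ω (idx k ω)⟫
          + (η k)^2 * ‖sfun k ω (idx k ω)‖^2 := by
        rw [PiLp.norm_sq_eq_of_L2, Finset.sum_congr rfl fun i _ => hterm i,
          Finset.sum_add_distrib, Finset.sum_ite_eq' Finset.univ (idx k ω),
          ← PiLp.norm_sq_eq_of_L2]
        simp only [Finset.mem_univ, if_true]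
        ring
      have htail : ∑ d ∈ Finset.range (k+1), cc (k+1-d) * g d ω =
          cc 1 * ((η k)^2 * ‖sfun k ω (idx k ω)‖^2)
            + ∑ d ∈ Finset.range k, cc (k+1-d) * g d ω := by
        rw [Finset.sum_range_succ, show k+1-k = 1 from by omega, hgval]
        ring
      rw [hnorm, htail]
    -- sum over the random coordinate
    have hGsum : ∀ k ω, ∑ a : Fin m, G k a ω =
        (m:ℝ) * ‖x k ω - xs‖^2 - 2 * η k * ⟪x k ω - xs, sfun k ω⟫ + (η k)^2 * ‖sfun k ω‖^2
          + (m:ℝ)⁻¹ * (cc 1 * ((η k)^2 * ‖sfun k ω‖^2)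
            + (m:ℝ) * ∑ d ∈ Finset.range k, cc (k + 1 - d) * g d ω) := by
      intro k ω
      have h1 : ∑ a : Fin m, ⟪x k ω a - xs a, sfun k ω a⟫ = ⟪x k ω - xs, sfun k ω⟫ := by
        rw [PiLp.inner_apply]
        exact Finset.sum_congr rfl fun a _ => by rw [PiLp.sub_apply]
      have h2 : ∑ a : Fin m, ‖sfun k ω a‖^2 = ‖sfun k ω‖^2 :=
        (PiLp.norm_sq_eq_of_L2 _ _).symm
      have hcard : ((Finset.univ : Finset (Fin m)).card : ℝ) = (m:ℝ) := by simp
      calc ∑ a : Fin m, G k a ω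
          = ∑ a : Fin m, (‖x k ω - xs‖^2
              - 2 * η k * ⟪x k ω a - xs a, sfun k ω a⟫ + (η k)^2 * ‖sfun k ω a‖^2
              + (m:ℝ)⁻¹ * (cc 1 * ((η k)^2 * ‖sfun k ω a‖^2)
                + ∑ d ∈ Finset.range k, cc (k + 1 - d) * g d ω)) :=
            Finset.sum_congr rfl fun a _ => hG k a ω
        _ = (∑ _a : Fin m, ‖x k ω - xs‖^2)
              - 2 * η k * (∑ a : Fin m, ⟪x k ω a - xs a, sfun k ω a⟫)
              + (η k)^2 * (∑ a : Fin m, ‖sfun k ω a‖^2)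
              + (m:ℝ)⁻¹ * (cc 1 * ((η k)^2 * (∑ a : Fin m, ‖sfun k ω a‖^2))
                + (∑ _a : Fin m, ∑ d ∈ Finset.range k, cc (k + 1 - d) * g d ω)) := by
            rw [Finset.sum_add_distrib, Finset.sum_add_distrib, Finset.sum_sub_distrib,
              ← Finset.mul_sum, ← Finset.mul_sum, ← Finset.mul_sum]
            congr 1
            rw [Finset.sum_add_distrib, ← Finset.mul_sum, ← Finset.mul_sum]
        _ = (m:ℝ) * ‖x k ω - xs‖^2 - 2 * η k * ⟪x k ω - xs, sfun k ω⟫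
              + (η k)^2 * ‖sfun k ω‖^2
              + (m:ℝ)⁻¹ * (cc 1 * ((η k)^2 * ‖sfun k ω‖^2)
                + (m:ℝ) * ∑ d ∈ Finset.range k, cc (k + 1 - d) * g d ω) := by
            rw [h1, h2, Finset.sum_const, Finset.sum_const, Finset.card_univ,
              Fintype.card_fin, nsmul_eq_mul, nsmul_eq_mul]
            all_goals ring
    -- the central pathwise inequality
    have hclaim2 : ∀ k ω, (m:ℝ)⁻¹ * ∑ a : Fin m, G k a ω ≤
        Ξ xs k ω - ((1-c) * (m:ℝ)⁻¹) * δ k ω := by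
      intro k ω
      set J := Finset.univ.sup (jv k) with hJ
      set ns := ‖sfun k ω‖ with hns
      set B := ⟪x k ω - xs, sfun k ω⟫ with hB
      set C := ⟪x k ω - xhat k ω, sfun k ω⟫ with hC
      set W := ∑ d ∈ Finset.range k, cc (k - d) * g d ω with hW
      set W' := ∑ d ∈ Finset.range k, cc (k + 1 - d) * g d ω with hW'
      set E := ∑ d ∈ Finset.range k, ε (k - d) * g d ω with hE
      set Q := ∑ l ∈ Finset.range J, (ε (l + 1))⁻¹ with hQ
      set SΔ := ∑ d ∈ Finset.Ico (k - J) k, ‖x (d+1) ω - x d ω‖ with hSΔ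
      -- decomposition of the inner product
      have hdecomp : B = ⟪xhat k ω - xs, sfun k ω⟫ + C := by
        rw [hB, hC, ← inner_add_left]
        congr 1
        abel
      -- cocoercivity
      have hcoco : ns^2 ≤ 2 * ⟪xhat k ω - xs, sfun k ω⟫ := by
        have h := arock_coco hT hxs (xhat k ω)
        rw [hns, hsfun]
        exact h
      have hF4 : ns^2 ≤ 2 * (B - C) := by rw [hdecomp]; linarith
      -- cross-term bound
      have hF5 : |C| ≤ SΔ * ns := by
        have hcoordsum : ∀ i : Fin m, x k ω i - xhat k ω i =
            ∑ d ∈ Finset.Ico (k - jv k i) k, (x (d+1) ω i - x d ω i) := by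
          intro i
          rw [arock_telescope_Ico (fun d => x d ω i) (Nat.sub_le k (jv k i)), hxhat]
        have hIsub : ∀ i : Fin m, Finset.Ico (k - jv k i) k ⊆ Finset.Ico (k - J) k := by
          intro i
          refine Finset.Ico_subset_Ico ?_ le_rfl
          have : jv k i ≤ J := Finset.le_sup (Finset.mem_univ i)
          omega
        rw [hC, PiLp.inner_apply]
        calc |∑ i, ⟪(x k ω - xhat k ω) i, sfun k ω i⟫|
            ≤ ∑ i, |⟪(x k ω - xhat k ω) i, sfun k ω i⟫| :=
              Finset.abs_sum_le_sum_abs _ _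
          _ ≤ ∑ i, ∑ d ∈ Finset.Ico (k - J) k, ‖x (d+1) ω i - x d ω i‖ * ‖sfun k ω i‖ := by
              refine Finset.sum_le_sum fun i _ => ?_
              rw [PiLp.sub_apply, hcoordsum i, sum_inner]
              calc |∑ d ∈ Finset.Ico (k - jv k i) k, ⟪x (d+1) ω i - x d ω i, sfun k ω i⟫|
                  ≤ ∑ d ∈ Finset.Ico (k - jv k i) k, |⟪x (d+1) ω i - x d ω i, sfun k ω i⟫| :=
                    Finset.abs_sum_le_sum_abs _ _
                _ ≤ ∑ d ∈ Finset.Ico (k - jv k i) k, ‖x (d+1) ω i - x d ω i‖ * ‖sfun k ω i‖ :=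
                    Finset.sum_le_sum fun d _ => abs_real_inner_le_norm _ _
                _ ≤ ∑ d ∈ Finset.Ico (k - J) k, ‖x (d+1) ω i - x d ω i‖ * ‖sfun k ω i‖ :=
                    Finset.sum_le_sum_of_subset_of_nonneg (hIsub i)
                      (fun d _ _ => mul_nonneg (norm_nonneg _) (norm_nonneg _))
          _ = ∑ d ∈ Finset.Ico (k - J) k, ∑ i, ‖x (d+1) ω i - x d ω i‖ * ‖sfun k ω i‖ :=
              Finset.sum_comm
          _ ≤ ∑ d ∈ Finset.Ico (k - J) k, ‖x (d+1) ω - x d ω‖ * ns :=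
              Finset.sum_le_sum fun d _ => hcross_coord d k ω
          _ = SΔ * ns := by rw [hSΔ, Finset.sum_mul]
      -- Young/reindexing bound
      have hF6 : 2 * η k * (SΔ * ns) ≤ E + (η k)^2 * Q * ns^2 := by
        have hterm : ∀ d ∈ Finset.Ico (k - J) k,
            ‖x (d+1) ω - x d ω‖ * (2 * η k * ns) ≤
              ε (k - d) * g d ω + (ε (k - d))⁻¹ * ((η k)^2 * ns^2) := by
          intro d _
          have h := arock_young_aux (hε (k - d)) (a := ‖x (d+1) ω - x d ω‖) (b := η k * ns)
          rw [hg]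
          nlinarith [h]
        calc 2 * η k * (SΔ * ns) = ∑ d ∈ Finset.Ico (k - J) k,
              ‖x (d+1) ω - x d ω‖ * (2 * η k * ns) := by
              rw [← Finset.sum_mul, ← hSΔ]
              ring
          _ ≤ ∑ d ∈ Finset.Ico (k - J) k,
              (ε (k - d) * g d ω + (ε (k - d))⁻¹ * ((η k)^2 * ns^2)) :=
              Finset.sum_le_sum hterm
          _ = (∑ d ∈ Finset.Ico (k - J) k, ε (k - d) * g d ω)
              + (∑ d ∈ Finset.Ico (k - J) k, (ε (k - d))⁻¹) * ((η k)^2 * ns^2) := by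
              rw [Finset.sum_add_distrib, Finset.sum_mul]
          _ ≤ E + (η k)^2 * Q * ns^2 := by
              have hEle : (∑ d ∈ Finset.Ico (k - J) k, ε (k - d) * g d ω) ≤ E := by
                rw [hE, Finset.range_eq_Ico]
                exact Finset.sum_le_sum_of_subset_of_nonneg
                  (Finset.Ico_subset_Ico (Nat.zero_le _) le_rfl)
                  (fun d _ _ => mul_nonneg (hε _).le (hgnn d ω))
              have hQle : (∑ d ∈ Finset.Ico (k - J) k, (ε (k - d))⁻¹) ≤ Q := by
                have hinj : ∀ a ∈ Finset.Ico (k - J) k, ∀ b ∈ Finset.Ico (k - J) k,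
                    k - a - 1 = k - b - 1 → a = b := by
                  intro a ha b hb hab
                  have ha' := Finset.mem_Ico.1 ha
                  have hb' := Finset.mem_Ico.1 hb
                  omega
                have himgsum : ∑ l ∈ (Finset.Ico (k - J) k).image (fun d => k - d - 1),
                    (ε (l + 1))⁻¹ = ∑ d ∈ Finset.Ico (k - J) k, (ε ((k - d - 1) + 1))⁻¹ :=
                  Finset.sum_image hinj
                calc ∑ d ∈ Finset.Ico (k - J) k, (ε (k - d))⁻¹
                    = ∑ d ∈ Finset.Ico (k - J) k, (ε ((k - d - 1) + 1))⁻¹ := by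
                      refine Finset.sum_congr rfl fun d hd => ?_
                      have hd' := Finset.mem_Ico.1 hd
                      congr 2
                      omega
                  _ = ∑ l ∈ (Finset.Ico (k - J) k).image (fun d => k - d - 1),
                      (ε (l + 1))⁻¹ := himgsum.symm
                  _ ≤ Q := by
                      rw [hQ]
                      refine Finset.sum_le_sum_of_subset_of_nonneg ?_
                        (fun l _ _ => inv_nonneg.2 (hε _).le)
                      intro l hl
                      obtain ⟨d, hd, rfl⟩ := Finset.mem_image.1 hl
                      have hd' := Finset.mem_Ico.1 hd
                      refine Finset.mem_range.2 ?_
                      omega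
              have hpos : (0:ℝ) ≤ (η k)^2 * ns^2 := by positivity
              nlinarith [mul_le_mul_of_nonneg_right hQle hpos]
      -- the linear identity from the step-size choice
      have hkeyid : (η k)^2 * ns^2 + (m:ℝ)⁻¹ * cc 1 * ((η k)^2 * ns^2) + (η k)^2 * Q * ns^2
          = c * (η k * ns^2) := by
        have h := hη_id k
        rw [← hQ] at h
        have h2 : η k * (1 + cc 1 / (m:ℝ) + Q) * (η k * ns^2) = c * (η k * ns^2) := by rw [h]
        field_simp at h2 ⊢
        linarith [h2]
      -- assemble the inner inequality
      have hinner : - (2 * η k) * B + (η k)^2 * ns^2 + (m:ℝ)⁻¹ * cc 1 * ((η k)^2 * ns^2) + W'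
          ≤ W - (1-c) * (η k * ns^2) := by
        have h12 : - (2 * η k) * B ≤ - (η k * ns^2) + E + (η k)^2 * Q * ns^2 := by
          have h1 : η k * ns^2 ≤ 2 * η k * B - 2 * η k * C := by
            nlinarith [hF4, (hη_pos k).le]
          have h2 : - (2 * η k * C) ≤ 2 * η k * (SΔ * ns) := by
            have h3 : -C ≤ |C| := neg_le_abs C
            nlinarith [hF5, (hη_pos k).le]
          linarith [hF6]
        have hWW : W = W' + E := by
          rw [hW, hW', hE, ← Finset.sum_add_distrib]
          refine Finset.sum_congr rfl fun d hd => ?_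
          have hdk := Finset.mem_range.1 hd
          have h1 : cc (k - d) = ε (k - d) + cc (k + 1 - d) := by
            rw [hcc_succ (k - d)]
            congr 2
            omega
          rw [h1]
          ring
        linarith [hkeyid]
      -- conclude
      rw [hGsum k ω, hΞ, hδ, ← hns, ← hB, ← hW, ← hW']
      have hexp : (m:ℝ)⁻¹ * ((m:ℝ) * ‖x k ω - xs‖^2 - 2 * η k * B + (η k)^2 * ns^2
          + (m:ℝ)⁻¹ * (cc 1 * ((η k)^2 * ns^2) + (m:ℝ) * W'))
          = ‖x k ω - xs‖^2 + (m:ℝ)⁻¹ * (- (2 * η k) * B + (η k)^2 * ns^2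
            + (m:ℝ)⁻¹ * cc 1 * ((η k)^2 * ns^2) + W') := by
        field_simp
        ring
      rw [hexp]
      have hmono := mul_le_mul_of_nonneg_left hinner (inv_nonneg.2 hm'.le)
      have hfin : (m:ℝ)⁻¹ * (W - (1-c) * (η k * ns^2))
          = (m:ℝ)⁻¹ * W - (1-c) * (m:ℝ)⁻¹ * (η k * ns^2) := by ring
      rw [hfin] at hmono
      linarith
    -- conditional expectation step
    have hcond : ∀ k, μ[Ξ xs (k+1) | F k] ≤ᵐ[μ]
        fun ω => Ξ xs k ω - ((1-c) * (m:ℝ)⁻¹) * δ k ω := by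
      intro k
      obtain ⟨ind, hind⟩ : ∃ ind : Fin m → Ω → ℝ,
          ∀ a ω, ind a ω = if idx k ω = a then (1:ℝ) else 0 := ⟨_, fun _ _ => rfl⟩
      have hinddet : ∀ a, ∀ {ω ω'}, π (k+1) ω = π (k+1) ω' → ind a ω = ind a ω' := by
        intro a ω ω' h
        have h2 := congrFun h ⟨k, Nat.lt_succ_self k⟩
        rw [hπ, hπ] at h2
        rw [hind, hind, h2]
      have hindint : ∀ a, Integrable (ind a) μ := fun a =>
        (hkey (k+1) _ (fun h => hinddet a h)).2
      have hprodint : ∀ a : Fin m, Integrable (G k a * ind a) μ := by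
        intro a
        have hdet : ∀ {ω ω'}, π (k+1) ω = π (k+1) ω' → (G k a * ind a) ω = (G k a * ind a) ω' := by
          intro ω ω' h
          have h1 : G k a ω = G k a ω' := hGdet k a (hrestrict (Nat.le_succ k) h)
          have h2 : ind a ω = ind a ω' := hinddet a h
          simp only [Pi.mul_apply, h1, h2]
        exact (hkey (k+1) _ (fun h => hdet h)).2
      have hrep : Ξ xs (k+1) = ∑ a : Fin m, G k a * ind a := by
        funext ω
        rw [hstep k ω, Finset.sum_apply]
        have h1 : ∀ a : Fin m, (G k a * ind a) ω = if idx k ω = a then G k a ω else 0 := by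
          intro a
          rw [Pi.mul_apply, hind]
          by_cases hia : idx k ω = a
          · rw [if_pos hia, if_pos hia, mul_one]
          · rw [if_neg hia, if_neg hia, mul_zero]
        rw [Finset.sum_congr rfl fun a _ => h1 a, Finset.sum_ite_eq Finset.univ (idx k ω)]
        simp
      have h2 : ∀ a : Fin m, μ[G k a * ind a | F k] =ᵐ[μ] fun ω => G k a ω * (m:ℝ)⁻¹ := by
        intro a
        have hpull : μ[G k a * ind a | F k] =ᵐ[μ] G k a * μ[ind a | F k] :=
          condExp_mul_of_stronglyMeasurable_left ((hGmeasF k a).stronglyMeasurable)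
            (hprodint a) (hindint a)
        refine hpull.trans ?_
        have h3 : μ[ind a | F k] =ᵐ[μ] fun _ => (m:ℝ)⁻¹ := by
          have h4 : ind a = fun ω => if idx k ω = a then (1:ℝ) else 0 := funext fun ω => hind a ω
          rw [h4]
          exact hindicator k a
        filter_upwards [h3] with ω hω
        rw [Pi.mul_apply, hω]
      have h1 : μ[Ξ xs (k+1) | F k] =ᵐ[μ] ∑ a : Fin m, μ[G k a * ind a | F k] := by
        rw [hrep]
        exact condExp_finset_sum (fun a _ => hprodint a) (F k)
      have hall : ∀ᵐ ω ∂μ, ∀ a : Fin m, (μ[G k a * ind a | F k]) ω = G k a ω * (m:ℝ)⁻¹ :=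
        (ae_all_iff).2 h2
      filter_upwards [h1, hall] with ω hω1 hω2
      rw [hω1, Finset.sum_apply, Finset.sum_congr rfl fun a _ => hω2 a]
      have h5 : ∑ a : Fin m, G k a ω * (m:ℝ)⁻¹ = (m:ℝ)⁻¹ * ∑ a : Fin m, G k a ω := by
        rw [← Finset.sum_mul]
        ring
      rw [h5]
      exact hclaim2 k ω
    -- expectations decrease
    have hEmono : ∀ k, ∫ ω, Ξ xs (k+1) ω ∂μ + ((1-c) * (m:ℝ)⁻¹) * ∫ ω, δ k ω ∂μ ≤
        ∫ ω, Ξ xs k ω ∂μ := by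
      intro k
      have h1 : ∫ ω, Ξ xs (k+1) ω ∂μ = ∫ ω, (μ[Ξ xs (k+1)|F k]) ω ∂μ :=
        (integral_condExp (hFle k)).symm
      have h2 : ∫ ω, (μ[Ξ xs (k+1)|F k]) ω ∂μ ≤
          ∫ ω, (Ξ xs k ω - ((1-c) * (m:ℝ)⁻¹) * δ k ω) ∂μ :=
        integral_mono_ae integrable_condExp ((hΞint k).sub ((hδint k).const_mul _)) (hcond k)
      rw [integral_sub (hΞint k) ((hδint k).const_mul _), integral_const_mul] at h2
      rw [h1]
      linarith
    have hΞ0 : ∫ ω, Ξ xs 0 ω ∂μ = ‖x0 - xs‖^2 := by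
      have h1 : ∀ ω, Ξ xs 0 ω = ‖x0 - xs‖^2 := fun ω => by
        rw [hΞ, hx0 ω]; simp
      rw [integral_congr_ae (Eventually.of_forall h1), integral_const]
      simp
    have hEchain : ∀ n : ℕ, ∫ ω, Ξ xs n ω ∂μ +
        ∑ k ∈ Finset.range n, ((1-c) * (m:ℝ)⁻¹) * ∫ ω, δ k ω ∂μ ≤ ‖x0 - xs‖^2 := by
      intro n
      induction n with
      | zero => simp [hΞ0]
      | succ n ihn =>
        rw [Finset.sum_range_succ]
        have := hEmono n
        linarith
    have hEbound : ∀ n, ∑ k ∈ Finset.range n, ((1-c) * (m:ℝ)⁻¹) * ∫ ω, δ k ω ∂μ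
        ≤ ‖x0 - xs‖^2 := by
      intro n
      have h1 := hEchain n
      have h2 : 0 ≤ ∫ ω, Ξ xs n ω ∂μ := integral_nonneg (fun ω => hΞnn n ω)
      linarith
    -- supermartingale and a.s. convergence
    have hadapted : StronglyAdapted ℱ (Ξ xs) := fun k => by
      rw [hℱ]
      exact (hΞmeas k).stronglyMeasurable
    have hsuper : Supermartingale (Ξ xs) ℱ μ := by
      refine supermartingale_nat hadapted hΞint fun k => ?_
      have h1 : μ[Ξ xs (k+1) | ℱ k] ≤ᵐ[μ] fun ω => Ξ xs k ω - ((1-c) * (m:ℝ)⁻¹) * δ k ω := by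
        rw [hℱ]
        exact hcond k
      filter_upwards [h1] with ω hω
      have h2 : 0 ≤ ((1-c) * (m:ℝ)⁻¹) * δ k ω :=
        mul_nonneg (mul_nonneg (by linarith) (inv_nonneg.2 hm'.le)) (hδnn k ω)
      calc (μ[Ξ xs (k+1) | ℱ k]) ω ≤ Ξ xs k ω - ((1-c) * (m:ℝ)⁻¹) * δ k ω := hω
        _ ≤ Ξ xs k ω := by linarith
    have hEΞle : ∀ n, ∫ ω, Ξ xs n ω ∂μ ≤ ‖x0 - xs‖^2 := by
      intro n
      have h1 := hEchain n
      have h2 : 0 ≤ ∑ k ∈ Finset.range n, ((1-c) * (m:ℝ)⁻¹) * ∫ ω, δ k ω ∂μ :=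
        Finset.sum_nonneg fun k _ =>
          mul_nonneg (mul_nonneg (by linarith) (inv_nonneg.2 hm'.le))
            (integral_nonneg fun ω => hδnn k ω)
      linarith
    have hbdd : ∀ n, eLpNorm ((-(Ξ xs)) n) 1 μ ≤ ENNReal.ofReal (‖x0 - xs‖^2) := by
      intro n
      have h1 : eLpNorm ((-(Ξ xs)) n) 1 μ = ∫⁻ ω, ENNReal.ofReal (Ξ xs n ω) ∂μ := by
        rw [eLpNorm_one_eq_lintegral_enorm]
        refine lintegral_congr fun ω => ?_
        rw [Pi.neg_apply, Pi.neg_apply, enorm_neg, Real.enorm_eq_ofReal (hΞnn n ω)]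
      rw [h1, ← ofReal_integral_eq_lintegral_ofReal (hΞint n)
        (Eventually.of_forall fun ω => hΞnn n ω)]
      exact ENNReal.ofReal_le_ofReal (hEΞle n)
    have hconv := (hsuper.neg.ae_tendsto_limitProcess hbdd)
    refine ⟨?_, hEbound⟩
    filter_upwards [hconv] with ω hω
    refine ⟨-(ℱ.limitProcess (-(Ξ xs)) μ ω), ?_⟩
    have h2 := hω.neg
    simp only [Pi.neg_apply, neg_neg] at h2
    exact h2
  -- ### almost sure summability of the slack terms
  obtain ⟨z₀, hz₀⟩ := hfix
  have hslack := (core z₀ hz₀).2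
  have hγpos : (0:ℝ) < (1-c) * (m:ℝ)⁻¹ := mul_pos (by linarith) (inv_pos.2 hm')
  have hδsum_bound : ∀ n : ℕ, ∑ k ∈ Finset.range n, ∫ ω, δ k ω ∂μ
      ≤ ‖x0 - z₀‖^2 / ((1-c) * (m:ℝ)⁻¹) := by
    intro n
    have h1 := hslack n
    rw [← Finset.mul_sum] at h1
    rw [le_div_iff₀ hγpos]
    linarith
  have hlintδ : ∀ k, ∫⁻ ω, ENNReal.ofReal (δ k ω) ∂μ = ENNReal.ofReal (∫ ω, δ k ω ∂μ) :=
    fun k => (ofReal_integral_eq_lintegral_ofReal (hδint k)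
      (Eventually.of_forall fun ω => hδnn k ω)).symm
  have htsum_fin : (∑' k, ∫⁻ ω, ENNReal.ofReal (δ k ω) ∂μ) ≠ ⊤ := by
    rw [ENNReal.tsum_eq_iSup_sum]
    refine ne_of_lt (lt_of_le_of_lt (iSup_le fun s => ?_)
      (ENNReal.ofReal_lt_top (r := ‖x0 - z₀‖^2 / ((1-c) * (m:ℝ)⁻¹) + 1)))
    obtain ⟨n, hn⟩ : ∃ n, s ⊆ Finset.range n := ⟨(s.sup id) + 1, fun a ha =>
      Finset.mem_range.2 (Nat.lt_succ_of_le (Finset.le_sup (f := id) ha))⟩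
    calc ∑ k ∈ s, ∫⁻ ω, ENNReal.ofReal (δ k ω) ∂μ
        ≤ ∑ k ∈ Finset.range n, ∫⁻ ω, ENNReal.ofReal (δ k ω) ∂μ :=
          Finset.sum_le_sum_of_subset hn
      _ = ENNReal.ofReal (∑ k ∈ Finset.range n, ∫ ω, δ k ω ∂μ) := by
          rw [Finset.sum_congr rfl fun k _ => hlintδ k,
            ← ENNReal.ofReal_sum_of_nonneg fun k _ => integral_nonneg fun ω => hδnn k ω]
      _ ≤ ENNReal.ofReal (‖x0 - z₀‖^2 / ((1-c) * (m:ℝ)⁻¹) + 1) :=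
          ENNReal.ofReal_le_ofReal (by linarith [hδsum_bound n])
  have haesum : ∀ᵐ ω ∂μ, Summable fun k => δ k ω := by
    have hmeas : ∀ k, Measurable fun ω => ENNReal.ofReal (δ k ω) := fun k =>
      (hδmeas k).ennreal_ofReal
    have hlt : ∀ᵐ ω ∂μ, (∑' k, ENNReal.ofReal (δ k ω)) < ⊤ := by
      refine ae_lt_top (by exact Measurable.ennreal_tsum hmeas) ?_
      rw [lintegral_tsum fun k => (hmeas k).aemeasurable]
      exact htsum_fin
    filter_upwards [hlt] with ω hω
    have h1 := ENNReal.summable_toReal hω.ne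
    refine h1.congr fun k => ?_
    rw [ENNReal.toReal_ofReal (hδnn k ω)]
  have hgsummable : ∀ ω, Summable (fun k => δ k ω) → Summable fun d => g d ω := by
    intro ω hsumδ
    refine Summable.of_nonneg_of_le (fun d => hgnn d ω) (fun d => ?_) hsumδ
    rw [hgval d ω, hδ d ω]
    have h1 : ‖sfun d ω (idx d ω)‖ ≤ ‖sfun d ω‖ := arock_coord_norm_le _ _
    have hsq : ‖sfun d ω (idx d ω)‖^2 ≤ ‖sfun d ω‖^2 := by
      nlinarith [norm_nonneg (sfun d ω (idx d ω)), norm_nonneg (sfun d ω)]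
    have hη2 : (η d)^2 ≤ η d := by nlinarith [hη_pos d, hη_le_one d]
    have h2 := mul_le_mul_of_nonneg_left hsq (sq_nonneg (η d))
    have h3 := mul_le_mul_of_nonneg_right hη2 (sq_nonneg (‖sfun d ω‖))
    linarith
  -- ### a countable dense set of fixed points
  haveI : SecondCountableTopology (PiLp 2 H) :=
    (PiLp.continuousLinearEquiv 2 ℝ H).toHomeomorph.isEmbedding.secondCountableTopology
  obtain ⟨D, hDc, hDfix, hDdense⟩ : ∃ D : Set (PiLp 2 H), D.Countable ∧
      (∀ z ∈ D, T z = z) ∧ ∀ xs, T xs = xs → ∀ r : ℝ, 0 < r → ∃ z ∈ D, ‖z - xs‖ < r := by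
    obtain ⟨s0, hs0c, hs0d⟩ := TopologicalSpace.exists_countable_dense {z : PiLp 2 H | T z = z}
    refine ⟨Subtype.val '' s0, hs0c.image _, ?_, ?_⟩
    · rintro z ⟨w, _, rfl⟩
      exact w.2
    · intro xs hxs r hr
      have hx : (⟨xs, hxs⟩ : {z : PiLp 2 H | T z = z}) ∈ closure s0 := hs0d _
      rcases Metric.mem_closure_iff.1 hx r hr with ⟨w, hw, hdist⟩
      refine ⟨(w : PiLp 2 H), ⟨w, hw, rfl⟩, ?_⟩
      rw [Subtype.dist_eq, dist_eq_norm] at hdist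
      rw [← norm_neg]
      simpa [neg_sub] using hdist
  have hcoreD : ∀ᵐ ω ∂μ, ∀ z ∈ D, ∃ L : ℝ, Tendsto (fun k => Ξ z k ω) atTop (𝓝 L) :=
    (ae_ball_iff hDc).2 fun z hz => (core z (hDfix z hz)).1
  -- ### conclusion
  filter_upwards [hcoreD, haesum] with ω hωD hωδ
  intro xs hxs
  have hgsum : Summable fun d => g d ω := hgsummable ω hωδ
  have htail0 : Tendsto (fun k => ∑ d ∈ Finset.range k, cc (k - d) * g d ω) atTop (𝓝 0) :=
    arock_tail_conv (fun d => g d ω) cc (fun d => hgnn d ω) hgsum hcc_anti hcc_tendsto hcc_nonneg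
  have hvz : ∀ z ∈ D, ∃ Lz : ℝ, Tendsto (fun k => ‖x k ω - z‖) atTop (𝓝 Lz) := by
    intro z hz
    obtain ⟨L, hL⟩ := hωD z hz
    have hsq : Tendsto (fun k => ‖x k ω - z‖^2) atTop (𝓝 L) := by
      have h1 := hL.sub (htail0.const_mul ((m:ℝ)⁻¹))
      have h2 : (fun k => Ξ z k ω - (m:ℝ)⁻¹ * ∑ d ∈ Finset.range k, cc (k - d) * g d ω)
          = fun k => ‖x k ω - z‖^2 := by
        funext k
        rw [hΞ]
        ring
      rw [h2] at h1
      simpa using h1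
    refine ⟨Real.sqrt L, ?_⟩
    have hcont := (Real.continuous_sqrt.tendsto L).comp hsq
    exact hcont.congr fun k => Real.sqrt_sq (norm_nonneg _)
  apply cauchySeq_tendsto_of_complete
  rw [Metric.cauchySeq_iff']
  intro e he
  obtain ⟨z, hzD, hznear⟩ := hDdense xs hxs (e/4) (by positivity)
  obtain ⟨Lz, hLz⟩ := hvz z hzD
  obtain ⟨N, hN⟩ := Metric.cauchySeq_iff'.1 hLz.cauchySeq (e/2) (by positivity)
  refine ⟨N, fun n hn => ?_⟩
  have h1 := hN n hn
  have hz1 : ∀ kk : ℕ, |‖x kk ω - xs‖ - ‖x kk ω - z‖| ≤ ‖z - xs‖ := by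
    intro kk
    have h2 := abs_norm_sub_norm_le (x kk ω - xs) (x kk ω - z)
    have heq : (x kk ω - xs) - (x kk ω - z) = z - xs := by abel
    rwa [heq] at h2
  rw [Real.dist_eq] at h1 ⊢
  have h2 := hz1 n
  have h3 := hz1 N
  have h4 : |‖x n ω - xs‖ - ‖x N ω - xs‖| ≤ |‖x n ω - xs‖ - ‖x n ω - z‖|
      + |‖x n ω - z‖ - ‖x N ω - z‖| + |‖x N ω - z‖ - ‖x N ω - xs‖| := by
    have := abs_sub_le (‖x n ω - xs‖) (‖x n ω - z‖) (‖x N ω - xs‖)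
    have := abs_sub_le (‖x n ω - z‖) (‖x N ω - z‖) (‖x N ω - xs‖)
    linarith
  have h5 : |‖x N ω - z‖ - ‖x N ω - xs‖| = |‖x N ω - xs‖ - ‖x N ω - z‖| := abs_sub_comm _ _
  linarith [h2, h3, h1, hznear, h4, h5.le]
end

section
/- (Convergence criterion for nonexpansive fixed-point iterations) Let H be a separable real Hilbert space, T : H → H a nonexpansive operator with at least one fixed point, and (x^k) a sequence in H. If (1) ‖x^k − x*‖ converges (to a finite limit) for every fixed point x* of T, and (2) ‖T x^k − x^k‖ → 0, then x^k converges weakly to some fixed point of T. -/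
open Filter
open scoped Topology

private lemma ultrafilter_limit_of_bounded (U : Ultrafilter ℕ) {g : ℕ → ℝ} {M : ℝ}
    (hg : ∀ k, |g k| ≤ M) : ∃ c, Tendsto g ↑U (𝓝 c) := by
  have hle : ↑(U.map g) ≤ 𝓟 (Set.Icc (-M) M) := by
    rw [Ultrafilter.coe_map, le_principal_iff, mem_map]
    exact univ_mem' fun k => abs_le.mp (hg k)
  obtain ⟨c, -, hc⟩ := (isCompact_Icc (a := -M) (b := M)).ultrafilter_le_nhds (U.map g) hle
  rw [Ultrafilter.coe_map] at hc
  exact ⟨c, hc⟩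

/-- For any ultrafilter `U` finer than `atTop`, a bounded sequence with vanishing residual
has a weak limit along `U` which is a fixed point of `T`. -/
private lemma key_lemma {E : Type*} [NormedAddCommGroup E] [InnerProductSpace ℝ E]
    [CompleteSpace E]
    (T : E → E) (hT : LipschitzWith 1 T) (x : ℕ → E)
    (h2 : Tendsto (fun k => ‖T (x k) - x k‖) atTop (𝓝 0))
    (M : ℝ) (hM : ∀ k, ‖x k‖ ≤ M)
    (U : Ultrafilter ℕ) (hU : ↑U ≤ (atTop : Filter ℕ)) :
    ∃ z : E, T z = z ∧
      ∀ y : E, Tendsto (fun k => (inner ℝ (x k) y : ℝ)) ↑U (𝓝 (inner ℝ z y : ℝ)) := by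
  -- ultrafilter limits of inner products exist
  have hlim : ∀ y : E, ∃ c, Tendsto (fun k => (inner ℝ (x k) y : ℝ)) ↑U (𝓝 c) := by
    intro y
    refine ultrafilter_limit_of_bounded U (M := M * ‖y‖) fun k => ?_
    calc |(inner ℝ (x k) y : ℝ)| ≤ ‖x k‖ * ‖y‖ := abs_real_inner_le_norm _ _
      _ ≤ M * ‖y‖ := by gcongr; exact hM k
  choose c hc using hlim
  -- c is linear
  have hadd : ∀ y₁ y₂ : E, c (y₁ + y₂) = c y₁ + c y₂ := by
    intro y₁ y₂
    refine tendsto_nhds_unique (hc (y₁ + y₂)) ?_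
    have := (hc y₁).add (hc y₂)
    simpa [inner_add_right] using this
  have hsmul : ∀ (r : ℝ) (y : E), c (r • y) = r * c y := by
    intro r y
    refine tendsto_nhds_unique (hc (r • y)) ?_
    have := (hc y).const_mul r
    simpa [real_inner_smul_right] using this
  have hbound : ∀ y : E, ‖c y‖ ≤ M * ‖y‖ := by
    intro y
    refine le_of_tendsto ((hc y).abs) (Eventually.of_forall fun k => ?_)
    calc |(inner ℝ (x k) y : ℝ)| ≤ ‖x k‖ * ‖y‖ := abs_real_inner_le_norm _ _
      _ ≤ M * ‖y‖ := by gcongr; exact hM k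
  set F : E →L[ℝ] ℝ :=
    LinearMap.mkContinuous
      { toFun := c, map_add' := hadd, map_smul' := hsmul } M hbound with hF
  set z : E := (InnerProductSpace.toDual ℝ E).symm F with hz
  have hzy : ∀ y : E, (inner ℝ z y : ℝ) = c y := by
    intro y
    rw [hz, InnerProductSpace.toDual_symm_apply]
    rfl
  -- z is a fixed point (demiclosedness)
  have hε : Tendsto (fun k => ‖T (x k) - x k‖) ↑U (𝓝 0) := h2.mono_left hU
  obtain ⟨a, ha⟩ : ∃ a, Tendsto (fun k => ‖x k - z‖) ↑U (𝓝 a) := by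
    refine ultrafilter_limit_of_bounded U (M := M + ‖z‖) fun k => ?_
    rw [abs_of_nonneg (norm_nonneg _)]
    calc ‖x k - z‖ ≤ ‖x k‖ + ‖z‖ := norm_sub_le _ _
      _ ≤ M + ‖z‖ := by gcongr; exact hM k
  have hinner0 : Tendsto (fun k => (inner ℝ (x k - z) (z - T z) : ℝ)) ↑U (𝓝 0) := by
    have h1' := (hc (z - T z)).sub_const ((inner ℝ z (z - T z) : ℝ))
    rw [← hzy, sub_self] at h1'
    simpa [inner_sub_left] using h1'
  have hsq : Tendsto (fun k => ‖x k - T z‖ ^ 2) ↑U (𝓝 (a ^ 2 + ‖z - T z‖ ^ 2)) := by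
    have heq : ∀ k, ‖x k - T z‖ ^ 2
        = ‖x k - z‖ ^ 2 + 2 * (inner ℝ (x k - z) (z - T z) : ℝ) + ‖z - T z‖ ^ 2 := by
      intro k
      have : x k - T z = (x k - z) + (z - T z) := by abel
      rw [this, norm_add_sq_real]
    simp only [heq]
    have hcb : Tendsto (fun _ : ℕ => ‖z - T z‖ ^ 2) ↑U (𝓝 (‖z - T z‖ ^ 2)) :=
      tendsto_const_nhds
    have := ((ha.pow 2).add ((hinner0.const_mul 2))).add hcb
    simpa using this
  have hub : Tendsto (fun k => (‖T (x k) - x k‖ + ‖x k - z‖) ^ 2) ↑U (𝓝 (a ^ 2)) := by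
    have := (hε.add ha).pow 2
    simpa using this
  have hle2 : a ^ 2 + ‖z - T z‖ ^ 2 ≤ a ^ 2 := by
    refine le_of_tendsto_of_tendsto' hsq hub fun k => ?_
    have h1 : ‖x k - T z‖ ≤ ‖T (x k) - x k‖ + ‖x k - z‖ := by
      calc ‖x k - T z‖ ≤ ‖x k - T (x k)‖ + ‖T (x k) - T z‖ := norm_sub_le_norm_sub_add_norm_sub _ _ _
        _ ≤ ‖T (x k) - x k‖ + ‖x k - z‖ := by
            rw [norm_sub_rev]
            gcongr
            simpa [dist_eq_norm] using hT.dist_le_mul (x k) z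
    exact pow_le_pow_left₀ (norm_nonneg _) h1 2
  have hfixz : T z = z := by
    have : ‖z - T z‖ ^ 2 ≤ 0 := by linarith
    have hnz : ‖z - T z‖ = 0 := by nlinarith [norm_nonneg (z - T z)]
    have := norm_eq_zero.mp hnz
    rw [sub_eq_zero] at this
    exact this.symm
  exact ⟨z, hfixz, fun y => by rw [hzy y]; exact hc y⟩

/-- **Convergence criterion for nonexpansive fixed-point iterations.** If `T` is a
nonexpansive operator on a separable real Hilbert space with a fixed point, `‖x^k − x*‖`
converges for every fixed point `x*`, and `‖T x^k − x^k‖ → 0`, then `x^k` converges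
weakly to some fixed point of `T`. -/
theorem nonexpansive_fixed_point_convergence_criterion
    {E : Type*} [NormedAddCommGroup E] [InnerProductSpace ℝ E] [CompleteSpace E]
    [SecondCountableTopology E]
    (T : E → E) (hT : LipschitzWith 1 T) (hfix : ∃ z, T z = z)
    (x : ℕ → E)
    (h1 : ∀ xs : E, T xs = xs →
      ∃ r : ℝ, Tendsto (fun k => ‖x k - xs‖) atTop (𝓝 r))
    (h2 : Tendsto (fun k => ‖T (x k) - x k‖) atTop (𝓝 0)) :
    ∃ z : E, T z = z ∧
      ∀ y : E, Tendsto (fun k => (inner ℝ (x k) y : ℝ)) atTop (𝓝 (inner ℝ z y : ℝ)) := by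
  -- boundedness
  obtain ⟨z₀, hz₀⟩ := hfix
  obtain ⟨r₀, hr₀⟩ := h1 z₀ hz₀
  obtain ⟨M₀, hM₀⟩ := hr₀.bddAbove_range
  set M : ℝ := M₀ + ‖z₀‖ with hMdef
  have hM : ∀ k, ‖x k‖ ≤ M := by
    intro k
    have h1' : ‖x k - z₀‖ ≤ M₀ := hM₀ ⟨k, rfl⟩
    calc ‖x k‖ = ‖(x k - z₀) + z₀‖ := by simp
      _ ≤ ‖x k - z₀‖ + ‖z₀‖ := norm_add_le _ _
      _ ≤ M₀ + ‖z₀‖ := by gcongr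
  -- uniqueness of ultrafilter weak limits (Opial's argument)
  have huniq : ∀ (z₁ z₂ : E) (U₁ U₂ : Ultrafilter ℕ), ↑U₁ ≤ (atTop : Filter ℕ) →
      ↑U₂ ≤ (atTop : Filter ℕ) → T z₁ = z₁ → T z₂ = z₂ →
      (∀ y, Tendsto (fun k => (inner ℝ (x k) y : ℝ)) ↑U₁ (𝓝 (inner ℝ z₁ y : ℝ))) →
      (∀ y, Tendsto (fun k => (inner ℝ (x k) y : ℝ)) ↑U₂ (𝓝 (inner ℝ z₂ y : ℝ))) →
      z₁ = z₂ := by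
    intro z₁ z₂ U₁ U₂ hU₁ hU₂ hfz₁ hfz₂ hw₁ hw₂
    obtain ⟨r₁, hr₁⟩ := h1 z₁ hfz₁
    obtain ⟨r₂, hr₂⟩ := h1 z₂ hfz₂
    set S : ℕ → ℝ := fun k => ‖x k - z₁‖ ^ 2 - ‖x k - z₂‖ ^ 2 with hS
    have hStendsto : Tendsto S atTop (𝓝 (r₁ ^ 2 - r₂ ^ 2)) := (hr₁.pow 2).sub (hr₂.pow 2)
    have hSid : ∀ k, S k = -2 * (inner ℝ (x k) z₁ : ℝ) + 2 * (inner ℝ (x k) z₂ : ℝ)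
        + ‖z₁‖ ^ 2 - ‖z₂‖ ^ 2 := by
      intro k
      simp only [hS, norm_sub_sq_real]
      ring
    have hSeq : S = fun k => -2 * (inner ℝ (x k) z₁ : ℝ) + 2 * (inner ℝ (x k) z₂ : ℝ)
        + ‖z₁‖ ^ 2 - ‖z₂‖ ^ 2 := funext hSid
    have hlim1 : Tendsto S ↑U₁
        (𝓝 (-2 * (inner ℝ z₁ z₁ : ℝ) + 2 * (inner ℝ z₁ z₂ : ℝ) + ‖z₁‖ ^ 2 - ‖z₂‖ ^ 2)) := by
      rw [hSeq]
      exact ((((hw₁ z₁).const_mul (-2)).add ((hw₁ z₂).const_mul 2)).add_const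
        (‖z₁‖ ^ 2)).sub_const (‖z₂‖ ^ 2)
    have hlim2 : Tendsto S ↑U₂
        (𝓝 (-2 * (inner ℝ z₂ z₁ : ℝ) + 2 * (inner ℝ z₂ z₂ : ℝ) + ‖z₁‖ ^ 2 - ‖z₂‖ ^ 2)) := by
      rw [hSeq]
      exact ((((hw₂ z₁).const_mul (-2)).add ((hw₂ z₂).const_mul 2)).add_const
        (‖z₁‖ ^ 2)).sub_const (‖z₂‖ ^ 2)
    have he₁ := tendsto_nhds_unique (hStendsto.mono_left hU₁) hlim1
    have he₂ := tendsto_nhds_unique (hStendsto.mono_left hU₂) hlim2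
    have hzz : (inner ℝ (z₁ - z₂) (z₁ - z₂) : ℝ) = 0 := by
      have hsym : (inner ℝ z₂ z₁ : ℝ) = inner ℝ z₁ z₂ := real_inner_comm _ _
      have hexp : (inner ℝ (z₁ - z₂) (z₁ - z₂) : ℝ)
          = inner ℝ z₁ z₁ - inner ℝ z₁ z₂ - inner ℝ z₂ z₁ + inner ℝ z₂ z₂ := by
        simp only [inner_sub_left, inner_sub_right]; ring
      rw [hexp]
      linarith [he₁.symm.trans he₂]
    have := inner_self_eq_zero.mp hzz
    rw [sub_eq_zero] at this
    exact this
  -- main assembly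
  set U₀ : Ultrafilter ℕ := Ultrafilter.of atTop with hU₀def
  have hU₀ : ↑U₀ ≤ (atTop : Filter ℕ) := Ultrafilter.of_le _
  obtain ⟨z, hfz, hwz⟩ := key_lemma T hT x h2 M hM U₀ hU₀
  refine ⟨z, hfz, fun y => ?_⟩
  rw [tendsto_iff_ultrafilter]
  intro U hU
  obtain ⟨z', hfz', hwz'⟩ := key_lemma T hT x h2 M hM U hU
  have : z' = z := huniq z' z U U₀ hU hU₀ hfz' hfz hwz' hwz
  rw [← this]
  exact hwz' y
end
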